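/- arXiv:2002.12892 — 7 statements merged into one kernel-verified Lean document; each statement's English description precedes it below -/
import Mathlib

section
/- Let q = p^e be a prime power, let 0 ≤ l ≤ e−1, let n ≤ q and k ≤ n. Let a_1,…,a_n be distinct elements of F_q and v_1,…,v_n nonzero elements of F_q, and set u_i = Π_{1≤j≤n, j≠i} (a_i − a_j)^{−1}. A codeword c = (v_1 f(a_1), v_2 f(a_2), …, v_n f(a_n)) of GRS_k(a,v) (with f ∈ F_q[x], deg f ≤ k−1) lies in the l-Galois dual code GRS_k(a,v)^{⊥_l} if and only if there exists a polynomial g(x) ∈ F_q[x] with deg g ≤ n−k−1 such that (v_1^{p^l+1} f(a_1)^{p^l}, v_2^{p^l+1} f(a_2)^{p^l}, …, v_n^{p^l+1} f(a_n)^{p^l}) = (u_1 g(a_1), u_2 g(a_2), …, u_n g(a_n)). -/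
open Finset Polynomial

/-- The `l`-Galois dual of a linear code `C ⊆ F^n` over a field `F` of characteristic `p`:
the set of `x` with `∑ i, y i * (x i)^(p^l) = 0` for all codewords `y ∈ C`. -/
def galoisDual (p l : ℕ) [Fact p.Prime] {F : Type*} [Field F] [CharP F p] {n : ℕ}
    (C : Submodule F (Fin n → F)) : Submodule F (Fin n → F) where
  carrier := {x | ∀ y ∈ C, ∑ i, y i * x i ^ p ^ l = 0}
  zero_mem' := by
    intro y _
    have hp : p ^ l ≠ 0 := pow_ne_zero _ (Fact.out (p := p.Prime)).ne_zero
    simp [zero_pow hp]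
  add_mem' := by
    intro a b ha hb y hy
    have h : ∀ i : Fin _, (a + b) i ^ p ^ l = a i ^ p ^ l + b i ^ p ^ l := by
      intro i
      simpa using add_pow_char_pow (a i) (b i) (p := p) (n := l)
    calc ∑ i, y i * (a + b) i ^ p ^ l
        = (∑ i, y i * a i ^ p ^ l) + ∑ i, y i * b i ^ p ^ l := by
          rw [← Finset.sum_add_distrib]; exact Finset.sum_congr rfl fun i _ => by
            rw [h i, mul_add]
      _ = 0 := by rw [ha y hy, hb y hy, add_zero]
  smul_mem' := by
    intro c x hx y hy
    have h : ∀ i : Fin _, (c • x) i ^ p ^ l = c ^ p ^ l * x i ^ p ^ l := by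
      intro i; simp [mul_pow]
    calc ∑ i, y i * (c • x) i ^ p ^ l
        = c ^ p ^ l * ∑ i, y i * x i ^ p ^ l := by
          rw [Finset.mul_sum]; exact Finset.sum_congr rfl fun i _ => by rw [h i]; ring
      _ = 0 := by rw [hx y hy, mul_zero]

/-- The evaluation map `f ↦ (v₁ f(a₁), …, vₙ f(aₙ))`. -/
noncomputable def grsEval (F : Type*) [Field F] (n : ℕ) (a v : Fin n → F) :
    Polynomial F →ₗ[F] (Fin n → F) where
  toFun f := fun i => v i * f.eval (a i)
  map_add' f g := by funext i; simp [mul_add]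
  map_smul' c f := by funext i; simp [smul_eq_mul]; ring

/-- The generalized Reed–Solomon code `GRS_k(a, v)`: the image of the polynomials of
degree at most `k - 1` under the evaluation map. -/
noncomputable def GRSCode (F : Type*) [Field F] (n k : ℕ) (a v : Fin n → F) :
    Submodule F (Fin n → F) :=
  (Polynomial.degreeLT F k).map (grsEval F n a v)


section Aux

variable {F : Type*} [Field F] {ι : Type*} [DecidableEq ι] {s : Finset ι} {v : ι → F}

lemma coeff_lagrange_basis (hvs : Set.InjOn v s) {i : ι} (hi : i ∈ s) :
    (Lagrange.basis s v i).coeff (s.card - 1) = Lagrange.nodalWeight s v i := by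
  rw [← Lagrange.natDegree_basis hvs hi, coeff_natDegree]
  unfold Lagrange.basis Lagrange.nodalWeight
  rw [leadingCoeff_prod]
  refine Finset.prod_congr rfl fun j hj => ?_
  rw [Lagrange.basisDivisor, leadingCoeff_mul, leadingCoeff_C,
    (monic_X_sub_C (v j)).leadingCoeff, mul_one]

lemma coeff_lagrange_interpolate (hvs : Set.InjOn v s) (r : ι → F) :
    (Lagrange.interpolate s v r).coeff (s.card - 1)
      = ∑ i ∈ s, Lagrange.nodalWeight s v i * r i := by
  rw [Lagrange.interpolate_apply, finset_sum_coeff]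
  exact Finset.sum_congr rfl fun i hi => by
    rw [coeff_C_mul, coeff_lagrange_basis hvs hi, mul_comm]

lemma sum_nodalWeight_mul_eval (hvs : Set.InjOn v s) {R : F[X]}
    (hR : R.degree < s.card) :
    ∑ i ∈ s, Lagrange.nodalWeight s v i * R.eval (v i) = R.coeff (s.card - 1) := by
  conv_rhs => rw [Lagrange.eq_interpolate hvs hR]
  exact (coeff_lagrange_interpolate hvs _).symm

end Aux

/-- Lemma 2: a codeword `(v₁ f(a₁), …, vₙ f(aₙ))` of `GRS_k(a, v)` lies in
the `l`-Galois dual `GRS_k(a, v)^{⊥_l}` iff there is a polynomial `g` with `deg g ≤ n - k - 1`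
such that `vᵢ^{pˡ+1} f(aᵢ)^{pˡ} = uᵢ g(aᵢ)` for all `i`, where
`uᵢ = ∏_{j ≠ i} (aᵢ - aⱼ)⁻¹`. -/
theorem grs_mem_galoisDual_iff (p e l n k : ℕ) [Fact p.Prime] (he : 0 < e)
    (hl : l ≤ e - 1) (hn : n ≤ p ^ e) (hkn : k ≤ n)
    (a v : Fin n → GaloisField p e) (ha : Function.Injective a) (hv : ∀ i, v i ≠ 0)
    (f : Polynomial (GaloisField p e)) (hf : f ∈ Polynomial.degreeLT (GaloisField p e) k) :
    (fun i => v i * f.eval (a i)) ∈ galoisDual p l (GRSCode (GaloisField p e) n k a v) ↔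
      ∃ g ∈ Polynomial.degreeLT (GaloisField p e) (n - k),
        ∀ i, v i ^ (p ^ l + 1) * f.eval (a i) ^ p ^ l =
          (∏ j ∈ Finset.univ.erase i, (a i - a j)⁻¹) * g.eval (a i) := by
    classical
  have hainj : Set.InjOn a ↑(Finset.univ : Finset (Fin n)) := ha.injOn
  have hcard : (Finset.univ : Finset (Fin n)).card = n := by simp
  have hu : ∀ i, Lagrange.nodalWeight Finset.univ a i ≠ 0 :=
    fun i => Lagrange.nodalWeight_ne_zero hainj (Finset.mem_univ i)
  -- bridge lemma
  have bridge : ∀ R : Polynomial (GaloisField p e), R.degree < (n : WithBot ℕ) →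
      ∑ i, Lagrange.nodalWeight Finset.univ a i * R.eval (a i) = R.coeff (n - 1) := by
    intro R hR
    have := sum_nodalWeight_mul_eval hainj (R := R) (by rwa [hcard])
    rwa [hcard] at this
  -- reformulate dual membership
  have hcond : (fun i => v i * f.eval (a i)) ∈ galoisDual p l (GRSCode (GaloisField p e) n k a v) ↔
      ∀ h : Polynomial (GaloisField p e), h ∈ Polynomial.degreeLT (GaloisField p e) k →
        ∑ i, h.eval (a i) * (v i ^ (p ^ l + 1) * f.eval (a i) ^ p ^ l) = 0 := by
    constructor
    · intro hx h hh
      have hmem : grsEval (GaloisField p e) n a v h ∈ GRSCode (GaloisField p e) n k a v :=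
        Submodule.mem_map_of_mem hh
      have h0 := hx _ hmem
      calc ∑ i, h.eval (a i) * (v i ^ (p ^ l + 1) * f.eval (a i) ^ p ^ l)
          = ∑ i, grsEval (GaloisField p e) n a v h i * (v i * f.eval (a i)) ^ p ^ l := by
            refine Finset.sum_congr rfl fun i _ => ?_
            show _ = v i * h.eval (a i) * (v i * f.eval (a i)) ^ p ^ l
            ring
        _ = 0 := h0
    · intro hx y hy
      obtain ⟨h, hh, rfl⟩ := hy
      calc ∑ i, grsEval (GaloisField p e) n a v h i * (v i * f.eval (a i)) ^ p ^ l
          = ∑ i, h.eval (a i) * (v i ^ (p ^ l + 1) * f.eval (a i) ^ p ^ l) := by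
            refine Finset.sum_congr rfl fun i _ => ?_
            show v i * h.eval (a i) * (v i * f.eval (a i)) ^ p ^ l = _
            ring
        _ = 0 := hx h hh
  rw [hcond]
  constructor
  · intro hsum
    set g := Lagrange.interpolate Finset.univ a
      (fun i => (Lagrange.nodalWeight Finset.univ a i)⁻¹ *
        (v i ^ (p ^ l + 1) * f.eval (a i) ^ p ^ l)) with hg_def
    have hgdeg : g.degree < (n : WithBot ℕ) := by
      have := Lagrange.degree_interpolate_lt
        (fun i => (Lagrange.nodalWeight Finset.univ a i)⁻¹ *
          (v i ^ (p ^ l + 1) * f.eval (a i) ^ p ^ l)) hainj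
      rwa [hcard] at this
    have hgeval : ∀ i, Lagrange.nodalWeight Finset.univ a i * g.eval (a i)
        = v i ^ (p ^ l + 1) * f.eval (a i) ^ p ^ l := by
      intro i
      rw [hg_def, Lagrange.eval_interpolate_at_node _ hainj (Finset.mem_univ i),
        mul_inv_cancel_left₀ (hu i)]
    have key : ∀ m, m < k → g.coeff (n - 1 - m) = 0 := by
      intro m
      induction m using Nat.strong_induction_on with
      | _ m IH =>
        intro hm
        have hn1 : 1 ≤ n := by omega
        have hRdeg : (X ^ m * g : Polynomial (GaloisField p e)).degree < (n : WithBot ℕ) := by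
          rw [degree_lt_iff_coeff_zero]
          intro j hj
          have hjm : j = (j - m) + m := by omega
          rw [hjm, coeff_X_pow_mul]
          by_cases hjn : n ≤ j - m
          · exact coeff_eq_zero_of_degree_lt (lt_of_lt_of_le hgdeg (by exact_mod_cast hjn))
          · have hj' : j - m = n - 1 - (n - 1 - (j - m)) := by omega
            rw [hj']
            exact IH _ (by omega) (by omega)
        have h1 := bridge (X ^ m * g) hRdeg
        have hXm : (X ^ m : Polynomial (GaloisField p e)) ∈
            Polynomial.degreeLT (GaloisField p e) k := by
          rw [Polynomial.mem_degreeLT, degree_X_pow]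
          exact_mod_cast hm
        have h2 : ∑ i, Lagrange.nodalWeight Finset.univ a i *
            (X ^ m * g : Polynomial (GaloisField p e)).eval (a i) = 0 := by
          rw [← hsum _ hXm]
          refine Finset.sum_congr rfl fun i _ => ?_
          rw [eval_mul, eval_pow, eval_X, ← hgeval i]
          ring
        have h3 : (X ^ m * g : Polynomial (GaloisField p e)).coeff (n - 1)
            = g.coeff (n - 1 - m) := by
          have hh : n - 1 = (n - 1 - m) + m := by omega
          rw [hh, coeff_X_pow_mul]
          congr 1
          omega
        rw [h2] at h1
        rw [← h3, ← h1]
    refine ⟨g, ?_, fun i => ?_⟩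
    · rw [Polynomial.mem_degreeLT, degree_lt_iff_coeff_zero]
      intro j hj
      by_cases hjn : n ≤ j
      · exact coeff_eq_zero_of_degree_lt (lt_of_lt_of_le hgdeg (by exact_mod_cast hjn))
      · have hj' : j = n - 1 - (n - 1 - j) := by omega
        rw [hj']
        exact key _ (by omega)
    · rw [← hgeval i]
      rfl
  · rintro ⟨g, hg, hgeq⟩ h hh
    have hweq : ∀ i, v i ^ (p ^ l + 1) * f.eval (a i) ^ p ^ l
        = Lagrange.nodalWeight Finset.univ a i * g.eval (a i) := fun i => hgeq i
    rcases eq_or_ne h 0 with rfl | hh0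
    · simp
    rcases eq_or_ne g 0 with rfl | hg0
    · have hz : ∀ i, v i ^ (p ^ l + 1) * f.eval (a i) ^ p ^ l = 0 := by
        intro i; rw [hweq i]; simp
      simp only [hz, mul_zero, Finset.sum_const_zero]
    rw [Polynomial.mem_degreeLT] at hh hg
    have hhd : h.natDegree < k := (natDegree_lt_iff_degree_lt hh0).mpr hh
    have hgd : g.natDegree < n - k := (natDegree_lt_iff_degree_lt hg0).mpr hg
    have hhg0 : h * g ≠ 0 := mul_ne_zero hh0 hg0
    have hmd : (h * g).natDegree = h.natDegree + g.natDegree := natDegree_mul hh0 hg0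
    have hdeg : (h * g).degree < (n : WithBot ℕ) := by
      rw [← natDegree_lt_iff_degree_lt hhg0, hmd]; omega
    calc ∑ i, h.eval (a i) * (v i ^ (p ^ l + 1) * f.eval (a i) ^ p ^ l)
        = ∑ i, Lagrange.nodalWeight Finset.univ a i * (h * g).eval (a i) := by
          refine Finset.sum_congr rfl fun i _ => ?_
          rw [hweq i, eval_mul]; ring
      _ = (h * g).coeff (n - 1) := bridge _ hdeg
      _ = 0 := coeff_eq_zero_of_degree_lt
          (by rw [← natDegree_lt_iff_degree_lt hhg0, hmd]; omega)
end

section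
/- Let q = p^e with p an odd prime and let 0 ≤ l ≤ e−1 with l dividing e (so that F_{p^l} is a subfield of F_q). Then the following are equivalent: (i) for every u ∈ F_{p^l}^*, there exists v ∈ F_q^* such that v^{p^l+1} = u; (ii) 2l divides e. -/
/-- Lemma 4: let `q = p^e` with `p` an odd prime and `0 ≤ l ≤ e - 1` with
`l ∣ e` (so that `F_{p^l}` is a subfield of `F_q`, its nonzero elements being exactly the
`u ≠ 0` with `u^{p^l} = u`).  Then every `u ∈ F_{p^l}^*` has the form `v^{p^l + 1}` for some
`v ∈ F_q^*` if and only if `2l ∣ e`. -/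
theorem exists_pow_eq_iff_two_mul_dvd (p e l : ℕ) [Fact p.Prime] (hodd : Odd p)
    (he : 0 < e) (hl : l ≤ e - 1) (hle : l ∣ e) :
    (∀ u : GaloisField p e, u ≠ 0 → u ^ p ^ l = u →
      ∃ v : GaloisField p e, v ≠ 0 ∧ v ^ (p ^ l + 1) = u) ↔ 2 * l ∣ e := by
  have hp : p.Prime := Fact.out
  set K := GaloisField p e with hK
  have hcard : Nat.card K = p ^ e := GaloisField.card p e he.ne'
  have hcardu : Nat.card Kˣ = p ^ e - 1 := by rw [Nat.card_units, hcard]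
  obtain ⟨g, hg⟩ := IsCyclic.exists_generator (α := Kˣ)
  have horder : orderOf g = p ^ e - 1 := by
    rw [orderOf_eq_card_of_forall_mem_zpowers hg, hcardu]
  have hple : Odd (p ^ e) := hodd.pow
  have hNeven : 2 ∣ p ^ e - 1 := (Nat.Odd.sub_odd hple odd_one).two_dvd
  constructor
  · -- forward: all u are (p^l+1)-powers → 2l ∣ e
    intro h
    by_contra h2
    rcases Nat.eq_zero_or_pos l with hl0 | hlpos
    · -- l = 0 : every element would be a square; contradiction with a nonsquare
      subst hl0
      have hchar : ringChar K ≠ 2 := by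
        rw [ringChar.eq K p]
        rintro rfl
        exact (Nat.not_odd_iff_even.mpr even_two) hodd
      obtain ⟨a, ha⟩ := FiniteField.exists_nonsquare hchar
      have ha0 : a ≠ 0 := by rintro rfl; exact ha ⟨0, (mul_zero 0).symm⟩
      obtain ⟨v, hv0, hveq⟩ := h a ha0 (by simp)
      exact ha ⟨v, by rw [← hveq]; ring⟩
    · -- l > 0, m := e / l is odd
      set m := e / l with hmdef
      have hml : l * m = e := Nat.mul_div_cancel' hle
      have hmodd : Odd m := by
        rcases Nat.even_or_odd m with ⟨k, hk⟩ | hmo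
        · exact absurd ⟨k, by rw [← hml, hk]; ring⟩ h2
        · exact hmo
      set c := ∑ i ∈ Finset.range m, (p ^ l) ^ i with hcdef
      have h1 : 1 ≤ p ^ l := Nat.one_le_pow _ _ hp.pos
      have hc : (p ^ l - 1) * c = p ^ e - 1 := by
        have key : (∑ i ∈ Finset.range m, ((p : ℤ) ^ l) ^ i) * ((p : ℤ) ^ l - 1)
            = ((p : ℤ) ^ l) ^ m - 1 := geom_sum_mul _ m
        have h2' : 1 ≤ (p ^ l) ^ m := Nat.one_le_pow _ _ (by positivity)
        have hpe : p ^ e = (p ^ l) ^ m := by rw [← pow_mul, hml]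
        rw [hcdef]
        zify [h1, hpe, h2']
        linarith [key]
      have hcodd : c % 2 = 1 := by
        have hterm : ∀ i ∈ Finset.range m, (p ^ l) ^ i % 2 = 1 := fun i _ =>
          Nat.odd_iff.mp (hodd.pow.pow)
        calc c % 2 = (∑ i ∈ Finset.range m, (p ^ l) ^ i % 2) % 2 :=
              Finset.sum_nat_mod _ _ _
          _ = (∑ _i ∈ Finset.range m, 1) % 2 := by rw [Finset.sum_congr rfl hterm]
          _ = m % 2 := by simp
          _ = 1 := Nat.odd_iff.mp hmodd
      -- u := g^c is in F_{p^l}^*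
      have hUp : (g ^ c) ^ p ^ l = g ^ c := by
        rw [← pow_mul, pow_eq_pow_iff_modEq, horder]
        have hle' : c ≤ c * p ^ l := Nat.le_mul_of_pos_right c (by positivity)
        refine ((Nat.modEq_iff_dvd' hle').mpr ?_).symm
        have heq : c * p ^ l - c = (p ^ l - 1) * c := by
          rw [Nat.sub_mul, one_mul, mul_comm]
        rw [heq, hc]
      have hupow : ((g ^ c : Kˣ) : K) ^ p ^ l = ((g ^ c : Kˣ) : K) := by
        calc ((g ^ c : Kˣ) : K) ^ p ^ l = (((g ^ c) ^ p ^ l : Kˣ) : K) := by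
              push_cast; ring
          _ = ((g ^ c : Kˣ) : K) := by rw [hUp]
      obtain ⟨v, hv0, hveq⟩ := h ((g ^ c : Kˣ) : K) (Units.ne_zero _) hupow
      set V : Kˣ := Units.mk0 v hv0 with hVdef
      have hVU : V ^ (p ^ l + 1) = g ^ c := by
        ext
        push_cast [hVdef]
        exact hveq
      obtain ⟨j, hj⟩ := (Submonoid.mem_powers_iff V g).mp
        (mem_powers_iff_mem_zpowers.mpr (hg V))
      have hmod : j * (p ^ l + 1) ≡ c [MOD p ^ e - 1] := by
        rw [← horder, ← pow_eq_pow_iff_modEq, pow_mul, hj, hVU]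
      have hmod2 : (j * (p ^ l + 1)) % 2 = c % 2 := hmod.of_dvd hNeven
      have hev : 2 ∣ p ^ l + 1 := (hodd.pow (n := l)).add_one.two_dvd
      have h2d : 2 ∣ j * (p ^ l + 1) := hev.mul_left j
      omega
  · -- backward: 2l ∣ e → every u in F_{p^l}^* is a (p^l+1)-power
    intro h2 u hu hul
    have hlpos : 0 < l := by
      rcases Nat.eq_zero_or_pos l with rfl | h
      · simp at h2; omega
      · exact h
    have h1 : 1 ≤ p ^ l := Nat.one_le_pow _ _ hp.pos
    set U : Kˣ := Units.mk0 u hu with hUdef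
    have hU1 : U ^ (p ^ l - 1) = 1 := by
      have hmul : U ^ (p ^ l - 1) * U = 1 * U := by
        ext
        push_cast [hUdef]
        simp only [Units.val_mk0]
        rw [one_mul, ← pow_succ, Nat.sub_add_cancel h1, hul]
      exact mul_right_cancel hmul
    obtain ⟨j, hj⟩ := (Submonoid.mem_powers_iff U g).mp
      (mem_powers_iff_mem_zpowers.mpr (hg U))
    have hdvd : p ^ e - 1 ∣ j * (p ^ l - 1) := by
      rw [← horder]
      apply orderOf_dvd_of_pow_eq_one
      rw [pow_mul, hj, hU1]
    -- p^{2l} - 1 divides p^e - 1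
    obtain ⟨n, hn⟩ := h2
    have hd2l : (p ^ (2 * l) - 1) ∣ p ^ e - 1 := by
      have := Nat.sub_dvd_pow_sub_pow (p ^ (2 * l)) 1 n
      rwa [one_pow, ← pow_mul, ← hn] at this
    have hfac : p ^ (2 * l) - 1 = (p ^ l + 1) * (p ^ l - 1) := by
      have hsq : p ^ (2 * l) = (p ^ l) ^ 2 := by rw [← pow_mul, mul_comm]
      rw [hsq, ← one_pow 2, Nat.sq_sub_sq, one_pow]
    obtain ⟨s, hs⟩ := hd2l
    obtain ⟨t, ht⟩ := hdvd
    have hkey : j = (p ^ l + 1) * (s * t) := by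
      have hpos : 0 < p ^ l - 1 := by
        have h2p : 2 ≤ p ^ l := by
          calc 2 ≤ p := hp.two_le
            _ = p ^ 1 := (pow_one p).symm
            _ ≤ p ^ l := Nat.pow_le_pow_right hp.pos hlpos
        omega
      apply Nat.eq_of_mul_eq_mul_right hpos
      rw [ht, hs, hfac]
      ring
    refine ⟨((g ^ (s * t) : Kˣ) : K), Units.ne_zero _, ?_⟩
    have hfin : (g ^ (s * t)) ^ (p ^ l + 1) = U := by
      rw [← pow_mul, mul_comm, ← hkey, hj]
    calc ((g ^ (s * t) : Kˣ) : K) ^ (p ^ l + 1)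
        = (((g ^ (s * t)) ^ (p ^ l + 1) : Kˣ) : K) := by push_cast; ring
      _ = (U : K) := by rw [hfin]
      _ = u := rfl
end

section
/- Let q = p^e with p an odd prime and let 0 ≤ l ≤ e−1 with 2l dividing e. Let n ≤ p^l. Then for any 1 ≤ k ≤ ⌊n/2⌋ and any integer h with 0 ≤ h ≤ k, there exists an [n,k]_q MDS linear code C over F_q whose l-Galois hull Hull_l(C) = C ∩ C^{⊥_l} has dimension exactly h. -/
open Finset

/-- The Hamming weight of a vector: the number of nonzero coordinates. -/
noncomputable def wt {F : Type*} [Zero F] {n : ℕ} (x : Fin n → F) : ℕ :=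
  Set.ncard {i | x i ≠ 0}

/-- The `l`-Galois hull `Hull_l(C) = C ∩ C^{⊥_l}` of a linear code. -/
def galoisHull (p l : ℕ) [Fact p.Prime] {F : Type*} [Field F] [CharP F p] {n : ℕ}
    (C : Submodule F (Fin n → F)) : Submodule F (Fin n → F) :=
  C ⊓ galoisDual p l C

/-- `C` is an `[n, k]` MDS code: it has dimension `k` and minimum Hamming distance
exactly `n - k + 1`. -/
def IsMDSCode {F : Type*} [Field F] {n : ℕ} (C : Submodule F (Fin n → F)) (k : ℕ) : Prop :=
  Module.finrank F C = k ∧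
    (∀ x ∈ C, x ≠ 0 → n - k + 1 ≤ wt x) ∧
    (∃ x ∈ C, x ≠ 0 ∧ wt x = n - k + 1)

open Polynomial

private lemma exists_pow_eq_aux {F : Type*} [Field F] [Fintype F] {m : ℕ} (hm : 2 ≤ m)
    (hdvd : m ^ 2 - 1 ∣ Fintype.card F - 1) {u : F} (hu : u ≠ 0) (hum : u ^ m = u) :
    ∃ v : F, v ≠ 0 ∧ v ^ (m + 1) = u := by
  classical
  obtain ⟨g, hg⟩ := IsCyclic.exists_generator (α := Fˣ)
  set U : Fˣ := Units.mk0 u hu with hU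
  obtain ⟨a, ha⟩ : ∃ a : ℕ, g ^ a = U := by
    have := hg U
    rwa [← mem_powers_iff_mem_zpowers, Submonoid.mem_powers_iff] at this
  have hordg : orderOf g = Fintype.card Fˣ := by
    rw [orderOf_eq_card_of_forall_mem_zpowers hg, Nat.card_eq_fintype_card]
  have hUm : U ^ (m - 1) = 1 := by
    have h1 : u ^ (m - 1) * u = u := by
      rw [← pow_succ]
      have h2 : m - 1 + 1 = m := by omega
      rw [h2, hum]
    have h3 : u ^ (m - 1) = 1 := by
      have := mul_right_cancel₀ hu (h1.trans (one_mul u).symm)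
      simpa using this
    ext
    push_cast
    exact h3
  have hNdvd : Fintype.card Fˣ ∣ a * (m - 1) := by
    rw [← hordg]
    apply orderOf_dvd_of_pow_eq_one
    rw [pow_mul, ha, hUm]
  have hcardU : Fintype.card Fˣ = Fintype.card F - 1 := by rw [Fintype.card_units]
  obtain ⟨r, hr⟩ := hdvd
  have hsq : m ^ 2 - 1 = (m + 1) * (m - 1) := by
    obtain ⟨m', rfl⟩ : ∃ m', m = m' + 1 := ⟨m - 1, by omega⟩
    have h1 : (m' + 1) ^ 2 = m' * m' + 2 * m' + 1 := by ring
    have h2 : m' + 1 - 1 = m' := by omega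
    rw [h1, h2]
    have h3 : (m' + 1 + 1) * m' = m' * m' + 2 * m' := by ring
    omega
  have hN : Fintype.card Fˣ = ((m + 1) * r) * (m - 1) := by
    rw [hcardU, hr, hsq]; ring
  have hdvda : (m + 1) * r ∣ a := by
    have := hNdvd
    rw [hN] at this
    exact (Nat.mul_dvd_mul_iff_right (by omega : 0 < m - 1)).mp this
  obtain ⟨c, hc⟩ := hdvda
  refine ⟨((g ^ (r * c) : Fˣ) : F), Units.ne_zero _, ?_⟩
  have : (g ^ (r * c)) ^ (m + 1) = U := by
    rw [← pow_mul, ← ha, hc]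
    ring_nf
  calc ((g ^ (r * c) : Fˣ) : F) ^ (m + 1) = (((g ^ (r * c)) ^ (m + 1) : Fˣ) : F) := by push_cast; ring
    _ = u := by rw [this]; rfl

private lemma exists_points_aux {F : Type*} [Field F] [Fintype F] (p l e : ℕ) [Fact p.Prime]
    [CharP F p] (hl : 1 ≤ l) (he : 1 ≤ e) (hle : l ∣ e) (hcard : Fintype.card F = p ^ e) :
    ∃ t : Finset F, t.card = p ^ l ∧ ∀ x ∈ t, x ^ p ^ l = x := by
  classical
  have hp1 : 1 < p := (Fact.out (p := p.Prime)).one_lt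
  have hpl1 : 1 < p ^ l := Nat.one_lt_pow (by omega) hp1
  have hpe1 : 1 < p ^ e := Nat.one_lt_pow (by omega) hp1
  set φ : F[X] := X ^ p ^ l - X with hφ
  set ψ : F[X] := X ^ p ^ e - X with hψ
  have hψne : ψ ≠ 0 := by
    rw [hψ, ← hcard]
    exact FiniteField.X_pow_card_sub_X_ne_zero F (hcard ▸ hpe1)
  have hψsplits : Splits ψ := by
    rw [splits_iff_card_roots]
    rw [hψ, ← hcard, FiniteField.roots_X_pow_card_sub_X F,
      FiniteField.X_pow_card_sub_X_natDegree_eq F (hcard ▸ hpe1)]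
    simp [Finset.card_univ]
  have hdvdN : p ^ l - 1 ∣ p ^ e - 1 := by
    obtain ⟨t, rfl⟩ := hle
    simpa [pow_mul] using Nat.sub_dvd_pow_sub_pow (p ^ l) 1 t
  have hφdvd : φ ∣ ψ := by
    have h1 : φ = X * (X ^ (p ^ l - 1) - 1) := by
      rw [hφ, mul_sub, mul_one, ← pow_succ']
      congr 2
      omega
    have h2 : ψ = X * (X ^ (p ^ e - 1) - 1) := by
      rw [hψ, mul_sub, mul_one, ← pow_succ']
      congr 2
      omega
    rw [h1, h2]
    apply mul_dvd_mul_left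
    obtain ⟨d, hd⟩ := hdvdN
    rw [hd, pow_mul]
    simpa using sub_dvd_pow_sub_pow ((X : F[X]) ^ (p ^ l - 1)) 1 d
  have hφsplits : Splits φ :=
    hψsplits.of_dvd hψne hφdvd
  have hφsep : φ.Separable := galois_poly_separable p (p ^ l) (dvd_pow_self p (by omega))
  have hφne : φ ≠ 0 := by
    intro h0
    have := hφsep
    rw [h0] at this
    exact (not_separable_zero this)
  have hφnat : φ.natDegree = p ^ l := by
    rw [hφ]
    exact FiniteField.X_pow_card_sub_X_natDegree_eq F hpl1
  have hroots : Multiset.card φ.roots = p ^ l := by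
    rw [← hφnat]
    exact (splits_iff_card_roots.mp hφsplits)
  have hnodup : φ.roots.Nodup := nodup_roots hφsep
  refine ⟨φ.roots.toFinset, ?_, ?_⟩
  · rw [Multiset.toFinset_card_of_nodup hnodup, hroots]
  · intro x hx
    rw [Multiset.mem_toFinset, mem_roots hφne] at hx
    have := hx
    rw [hφ] at this
    simp only [IsRoot, eval_sub, eval_pow, eval_X] at this
    exact sub_eq_zero.mp this

private lemma card_filter_fin_lt {n c : ℕ} (hc : c ≤ n) :
    ((univ : Finset (Fin n)).filter (fun i : Fin n => (i : ℕ) < c)).card = c := by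
  classical
  have himg : ((univ : Finset (Fin n)).filter (fun i : Fin n => (i : ℕ) < c)).image
      (fun i : Fin n => (i : ℕ)) = Finset.range c := by
    ext x
    simp only [Finset.mem_image, Finset.mem_filter, Finset.mem_univ, true_and, Finset.mem_range]
    constructor
    · rintro ⟨i, hi, rfl⟩; exact hi
    · intro hx; exact ⟨⟨x, lt_of_lt_of_le hx hc⟩, hx, rfl⟩
  have := congrArg Finset.card himg
  rwa [Finset.card_image_of_injective _ Fin.val_injective, Finset.card_range] at this

private lemma leadingCoeff_lagrange_basis {F : Type*} [Field F] {ι : Type*} [DecidableEq ι]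
    (s : Finset ι) (v : ι → F) (i : ι) :
    (Lagrange.basis s v i).leadingCoeff = ∏ j ∈ s.erase i, (v i - v j)⁻¹ := by
  rw [Lagrange.basis, leadingCoeff_prod]
  refine Finset.prod_congr rfl fun j _ => ?_
  rw [Lagrange.basisDivisor, leadingCoeff_mul, leadingCoeff_C,
    (monic_X_sub_C (v j)).leadingCoeff, mul_one]

private lemma lagrange_sum_aux {F : Type*} [Field F] {n : ℕ}
    (a : Fin n → F) (ha : Function.Injective a) (P : F[X])
    (hP : P.degree < ((n - 1 : ℕ) : WithBot ℕ)) :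
    ∑ i, (∏ j ∈ univ.erase i, (a i - a j)⁻¹) * P.eval (a i) = 0 := by
  classical
  have hinj : Set.InjOn a ↑(univ : Finset (Fin n)) := ha.injOn
  have hcard : (univ : Finset (Fin n)).card = n := by simp
  have hPn : P.degree < ((univ : Finset (Fin n)).card : WithBot ℕ) := by
    rw [hcard]
    exact lt_of_lt_of_le hP (by exact_mod_cast Nat.sub_le n 1)
  have hinterp := Lagrange.eq_interpolate hinj hPn
  have hc0 : P.coeff (n - 1) = 0 := coeff_eq_zero_of_degree_lt hP
  rw [hinterp, Lagrange.interpolate_apply, finset_sum_coeff] at hc0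
  rw [← hc0]
  refine Finset.sum_congr rfl fun i _ => ?_
  rw [coeff_C_mul]
  have hdeg : (Lagrange.basis univ a i).degree = ((univ.card - 1 : ℕ) : WithBot ℕ) :=
    Lagrange.degree_basis hinj (mem_univ i)
  have hnd : (Lagrange.basis univ a i).natDegree = n - 1 := by
    rw [natDegree_eq_of_degree_eq_some hdeg, hcard]
  have : (Lagrange.basis univ a i).coeff (n - 1) = ∏ j ∈ univ.erase i, (a i - a j)⁻¹ := by
    rw [← hnd, coeff_natDegree, leadingCoeff_lagrange_basis]
  rw [this]
  ring

private lemma eval_pow_frob {F : Type*} [Field F] (p l : ℕ) [Fact p.Prime] [CharP F p]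
    (x : F) (hx : x ^ p ^ l = x) (f : F[X]) :
    (f.eval x) ^ p ^ l = (f.map (iterateFrobenius F p l)).eval x := by
  have h1 : (f.map (iterateFrobenius F p l)).eval (iterateFrobenius F p l x)
      = iterateFrobenius F p l (f.eval x) := by
    rw [eval_map]
    exact eval₂_hom (iterateFrobenius F p l) x
  have h2 : iterateFrobenius F p l x = x := by rw [iterateFrobenius_def, hx]
  rw [h2] at h1
  rw [h1, iterateFrobenius_def]

/-- Theorem 2: let `q = p^e` with `p` an odd prime, `0 ≤ l ≤ e - 1` with
`2l ∣ e`, and `n ≤ p^l`.  Then for every `1 ≤ k ≤ ⌊n/2⌋` and `0 ≤ h ≤ k` there is an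
`[n, k]_q` MDS code whose `l`-Galois hull has dimension exactly `h`. -/
theorem exists_mds_code_galoisHull_dim_of_le_subfield_card
    (p e l n k h : ℕ) [Fact p.Prime] (hodd : Odd p) (he : 0 < e) (hl : l ≤ e - 1)
    (h2l : 2 * l ∣ e) (hn : n ≤ p ^ l) (hk1 : 1 ≤ k) (hk2 : k ≤ n / 2)
    (hh : h ≤ k) :
    ∃ C : Submodule (GaloisField p e) (Fin n → GaloisField p e),
      IsMDSCode C k ∧
      Module.finrank (GaloisField p e) (galoisHull p l C) = h := by
  classical
  set F := GaloisField p e with hFdef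
  haveI : Fintype F := Fintype.ofFinite F
  have hp : p.Prime := Fact.out
  have hp3 : 3 ≤ p := by
    rcases hodd with ⟨t, ht⟩
    have := hp.two_le
    omega
  have hl1 : 1 ≤ l := by
    rcases Nat.eq_zero_or_pos l with hl0 | hpos
    · subst hl0; rw [pow_zero] at hn; omega
    · exact hpos
  have hn2k : 2 * k ≤ n := by omega
  have hn2 : 2 ≤ n := by omega
  have hkn : k ≤ n := by omega
  have hcard : Fintype.card F = p ^ e := by
    rw [← Nat.card_eq_fintype_card]
    exact GaloisField.card p e (by omega)
  have hpl3 : 3 ≤ p ^ l := le_trans hp3 (by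
    calc p = p ^ 1 := (pow_one p).symm
      _ ≤ p ^ l := Nat.pow_le_pow_right (by omega) hl1)
  have hplodd : Odd (p ^ l) := hodd.pow
  -- choice of evaluation points
  obtain ⟨t0, ht0card, ht0fix⟩ :=
    exists_points_aux p l e hl1 (by omega) (dvd_trans ⟨2, by ring⟩ h2l) hcard
  obtain ⟨t1, ht1sub, ht1card⟩ := Finset.exists_subset_card_eq (s := t0) (n := n) (by rw [ht0card]; exact hn)
  set aeq := t1.equivFinOfCardEq ht1card with haeq
  set a : Fin n → F := fun i => ((aeq.symm i : t1) : F) with ha_def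
  have ha : Function.Injective a := by
    intro i j hij
    have h1 : aeq.symm i = aeq.symm j := Subtype.coe_injective hij
    simpa using congrArg aeq h1
  have hafix : ∀ i, (a i) ^ p ^ l = a i := fun i => ht0fix _ (ht1sub (aeq.symm i).2)
  -- the u function
  set u : Fin n → F := fun i => ∏ j ∈ univ.erase i, (a i - a j)⁻¹ with hu_def
  have hu0 : ∀ i, u i ≠ 0 := by
    intro i
    apply Finset.prod_ne_zero_iff.mpr
    intro j hj
    exact inv_ne_zero (sub_ne_zero_of_ne (fun hc => (Finset.mem_erase.mp hj).1 ((ha hc).symm)))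
  have hum : ∀ i, (u i) ^ p ^ l = u i := by
    intro i
    show (∏ j ∈ univ.erase i, (a i - a j)⁻¹) ^ p ^ l = ∏ j ∈ univ.erase i, (a i - a j)⁻¹
    rw [← Finset.prod_pow]
    refine Finset.prod_congr rfl fun j _ => ?_
    rw [inv_pow, sub_pow_char_pow, hafix i, hafix j]
  -- the twist
  set s := k - h with hs_def
  have hsk : s ≤ k := Nat.sub_le k h
  have hsn : s ≤ n := le_trans hsk hkn
  set ε : Fin n → F := fun i => if (i : ℕ) < s then -1 else 1 with hε_def
  have hε0 : ∀ i, ε i ≠ 0 := by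
    intro i
    show (if (i : ℕ) < s then (-1 : F) else 1) ≠ 0
    split <;> simp
  have hεm : ∀ i, (ε i) ^ p ^ l = ε i := by
    intro i
    show (if (i : ℕ) < s then (-1 : F) else 1) ^ p ^ l = if (i : ℕ) < s then (-1:F) else 1
    split
    · exact hplodd.neg_one_pow
    · exact one_pow _
  have hm2dvd : (p ^ l) ^ 2 - 1 ∣ Fintype.card F - 1 := by
    obtain ⟨t, ht⟩ := h2l
    rw [hcard, ht, ← pow_mul p l 2, show 2 * l * t = (l * 2) * t by ring, pow_mul p (l * 2) t]
    simpa using Nat.sub_dvd_pow_sub_pow (p ^ (l * 2)) 1 t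
  have hvex : ∀ i, ∃ w : F, w ≠ 0 ∧ w ^ (p ^ l + 1) = ε i * u i := by
    intro i
    apply exists_pow_eq_aux (by omega) hm2dvd (mul_ne_zero (hε0 i) (hu0 i))
    rw [mul_pow, hεm i, hum i]
  choose v hv0 hvm using hvex
  -- the code
  set Φ : Polynomial F →ₗ[F] (Fin n → F) :=
    { toFun := fun f i => v i * f.eval (a i)
      map_add' := by intro f g; funext i; simp [mul_add]
      map_smul' := by intro c f; funext i; simp; ring } with hΦ_def
  have hΦapp : ∀ (f : Polynomial F) i, Φ f i = v i * f.eval (a i) := fun _ _ => rfl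
  have hzero : ∀ f : Polynomial F, f.degree < (n : WithBot ℕ) → Φ f = 0 → f = 0 := by
    intro f hdeg h0
    by_contra hf
    have hev : ∀ i, f.eval (a i) = 0 := by
      intro i
      have h1 := congrFun h0 i
      rw [hΦapp] at h1
      simpa [hv0 i] using h1
    have hsub : univ.image a ⊆ f.roots.toFinset := by
      intro x hx
      obtain ⟨i, _, rfl⟩ := Finset.mem_image.mp hx
      rw [Multiset.mem_toFinset, mem_roots hf]
      exact hev i
    have h1 : n ≤ f.roots.toFinset.card := by
      have h2 := Finset.card_le_card hsub
      rwa [Finset.card_image_of_injective _ ha, Finset.card_univ, Fintype.card_fin] at h2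
    have h2 : f.roots.toFinset.card ≤ f.natDegree :=
      le_trans (Multiset.toFinset_card_le _) (card_roots' f)
    have h3 : f.natDegree < n := (natDegree_lt_iff_degree_lt hf).mpr hdeg
    omega
  set D := Polynomial.degreeLT F k with hD_def
  have hmemD : ∀ f : D, (f : Polynomial F).degree < (k : WithBot ℕ) := fun f => mem_degreeLT.mp f.2
  set ψ : D →ₗ[F] (Fin n → F) := Φ ∘ₗ D.subtype with hψ_def
  have hψapp : ∀ f : D, ψ f = Φ (f : Polynomial F) := fun _ => rfl
  have hψinj : Function.Injective ψ := by
    rw [← LinearMap.ker_eq_bot, Submodule.eq_bot_iff]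
    rintro ⟨f, hfD⟩ hker
    have hf0 : f = 0 := by
      apply hzero f (lt_of_lt_of_le (mem_degreeLT.mp hfD) (by exact_mod_cast hkn))
      exact LinearMap.mem_ker.mp hker
    exact Subtype.ext hf0
  set C := LinearMap.range ψ with hC_def
  haveI : Module.Finite F D := Module.Finite.equiv (Polynomial.degreeLTEquiv F k).symm
  have hDrank : Module.finrank F D = k := by
    rw [(Polynomial.degreeLTEquiv F k).finrank_eq]
    exact Module.finrank_fin_fun F
  have hCrank : Module.finrank F C = k := by
    rw [hC_def, LinearMap.finrank_range_of_inj hψinj, hDrank]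
  -- weight formula
  have hwt : ∀ x : Fin n → F, wt x = (univ.filter (fun i => x i ≠ 0)).card := by
    intro x
    rw [wt, ← Set.ncard_coe_finset]
    congr 1
    ext i
    simp
  -- minimum distance lower bound
  have hdist : ∀ x ∈ C, x ≠ 0 → n - k + 1 ≤ wt x := by
    intro x hx hx0
    obtain ⟨f, rfl⟩ := hx
    have hf0 : (f : Polynomial F) ≠ 0 := by
      intro hc
      apply hx0
      rw [hψapp, hc, map_zero]
    have hnd : (f : Polynomial F).natDegree < k := (natDegree_lt_iff_degree_lt hf0).mpr (hmemD f)
    have hZ : (univ.filter (fun i : Fin n => (f : Polynomial F).eval (a i) = 0)).card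
        ≤ (f : Polynomial F).natDegree := by
      have hsub : (univ.filter (fun i : Fin n => (f : Polynomial F).eval (a i) = 0)).image a
          ⊆ (f : Polynomial F).roots.toFinset := by
        intro x hx
        obtain ⟨i, hi, rfl⟩ := Finset.mem_image.mp hx
        rw [Multiset.mem_toFinset, mem_roots hf0]
        exact (Finset.mem_filter.mp hi).2
      have h2 := Finset.card_le_card hsub
      rw [Finset.card_image_of_injective _ ha] at h2
      exact le_trans h2 (le_trans (Multiset.toFinset_card_le _) (card_roots' _))
    have hcompl := Finset.card_filter_add_card_filter_not
      (s := (univ : Finset (Fin n))) (p := fun i : Fin n => (f : Polynomial F).eval (a i) = 0)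
    rw [Finset.card_univ, Fintype.card_fin] at hcompl
    have hfilter : (univ.filter (fun i : Fin n => ψ f i ≠ 0))
        = univ.filter (fun i : Fin n => ¬ ((f : Polynomial F).eval (a i) = 0)) := by
      apply Finset.filter_congr
      intro i _
      rw [hψapp, hΦapp]
      constructor
      · intro hne hc; exact hne (by rw [hc, mul_zero])
      · intro hne; exact mul_ne_zero (hv0 i) hne
    rw [hwt, hfilter]
    omega
  -- a codeword of weight exactly n - k + 1
  have hk1n : k - 1 ≤ n := by omega
  set g0 : Polynomial F := ∏ i ∈ univ.filter (fun i : Fin n => (i : ℕ) < k - 1),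
    (X - Polynomial.C (a i)) with hg0_def
  have hg0deg : g0.degree = ((k - 1 : ℕ) : WithBot ℕ) := by
    rw [hg0_def, degree_prod]
    rw [Finset.sum_congr rfl (fun i _ => degree_X_sub_C (a i))]
    rw [Finset.sum_const, card_filter_fin_lt hk1n]
    simp
  have hg0D : g0 ∈ D := by
    rw [hD_def, mem_degreeLT, hg0deg]
    exact_mod_cast Nat.sub_lt (by omega) one_pos
  have hg0ev : ∀ i : Fin n, g0.eval (a i) = 0 ↔ (i : ℕ) < k - 1 := by
    intro i
    constructor
    · intro h0
      by_contra hc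
      have : g0.eval (a i) ≠ 0 := by
        rw [hg0_def, eval_prod]
        apply Finset.prod_ne_zero_iff.mpr
        intro j hj
        simp only [eval_sub, eval_X, eval_C]
        apply sub_ne_zero_of_ne
        intro hij
        exact hc ((ha hij) ▸ (Finset.mem_filter.mp hj).2)
      exact this h0
    · intro hi
      rw [hg0_def, eval_prod]
      apply Finset.prod_eq_zero (Finset.mem_filter.mpr ⟨mem_univ i, hi⟩)
      simp
  have hlastlt : k - 1 < n := by omega
  have hx0C : ψ ⟨g0, hg0D⟩ ∈ C := ⟨⟨g0, hg0D⟩, rfl⟩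
  have hx0ne : ψ ⟨g0, hg0D⟩ ≠ 0 := by
    intro hc
    have h1 := congrFun hc ⟨k - 1, hlastlt⟩
    rw [hψapp, hΦapp] at h1
    simp only [Pi.zero_apply] at h1
    rcases mul_eq_zero.mp h1 with h2 | h2
    · exact hv0 _ h2
    · have := (hg0ev ⟨k - 1, hlastlt⟩).mp h2
      simp at this
  have hx0wt : wt (ψ ⟨g0, hg0D⟩) = n - k + 1 := by
    have hfilter : (univ.filter (fun i : Fin n => ψ ⟨g0, hg0D⟩ i ≠ 0))
        = univ.filter (fun i : Fin n => ¬ ((i : ℕ) < k - 1)) := by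
      apply Finset.filter_congr
      intro i _
      rw [hψapp, hΦapp]
      constructor
      · intro hne hc
        exact hne (by rw [(hg0ev i).mpr hc, mul_zero])
      · intro hge
        exact mul_ne_zero (hv0 i) (fun hc => hge ((hg0ev i).mp hc))
    have hcompl := Finset.card_filter_add_card_filter_not
      (s := (univ : Finset (Fin n))) (p := fun i : Fin n => (i : ℕ) < k - 1)
    rw [Finset.card_univ, Fintype.card_fin, card_filter_fin_lt hk1n] at hcompl
    rw [hwt, hfilter]
    omega
  -- Frobenius map on polynomials
  set σ : F →+* F := iterateFrobenius F p l with hσ_def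
  -- key orthogonality identity
  have key : ∀ f g : Polynomial F, f.degree < (k : WithBot ℕ) → g.degree < (k : WithBot ℕ) →
      ∑ i, u i * (g.eval (a i) * f.eval (a i)) = 0 := by
    intro f g hf hg
    have hdeg : (g * f).degree < ((n - 1 : ℕ) : WithBot ℕ) := by
      by_cases hg0 : g = 0
      · rw [hg0, zero_mul, degree_zero]
        exact WithBot.bot_lt_coe _
      by_cases hf0 : f = 0
      · rw [hf0, mul_zero, degree_zero]
        exact WithBot.bot_lt_coe _
      rw [degree_mul, degree_eq_natDegree hg0, degree_eq_natDegree hf0]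
      have h1 : g.natDegree < k := (natDegree_lt_iff_degree_lt hg0).mpr hg
      have h2 : f.natDegree < k := (natDegree_lt_iff_degree_lt hf0).mpr hf
      exact_mod_cast (by omega : g.natDegree + f.natDegree < n - 1)
    have hL := lagrange_sum_aux a ha (g * f) hdeg
    simp only [eval_mul] at hL
    exact hL
  -- the fundamental computation of the dual pairing terms
  have hεu : ∀ (f g : Polynomial F) (i : Fin n),
      Φ g i * (Φ f i) ^ p ^ l = ε i * (u i * (g.eval (a i) * (f.map σ).eval (a i))) := by
    intro f g i
    rw [hΦapp, hΦapp, mul_pow, eval_pow_frob p l (a i) (hafix i) f]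
    have hvv : v i * v i ^ p ^ l = ε i * u i := by
      rw [← hvm i, pow_succ]
      ring
    calc v i * g.eval (a i) * (v i ^ p ^ l * ((f.map σ).eval (a i)))
        = (v i * v i ^ p ^ l) * (g.eval (a i) * (f.map σ).eval (a i)) := by ring
      _ = ε i * u i * (g.eval (a i) * (f.map σ).eval (a i)) := by rw [hvv]
      _ = ε i * (u i * (g.eval (a i) * (f.map σ).eval (a i))) := by ring
  have hplne : p ^ l ≠ 0 := pow_ne_zero _ (by omega)
  -- membership in the Galois dual is characterised by the defining sums
  have hmem_dual : ∀ x : Fin n → F,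
      x ∈ galoisDual p l C ↔ ∀ y ∈ C, ∑ i, y i * x i ^ p ^ l = 0 := fun x => Iff.rfl
  -- polynomials vanishing on the first s points give codewords in the dual
  have hsub1 : ∀ f : D, (∀ i : Fin n, (i : ℕ) < s → (f : Polynomial F).eval (a i) = 0) →
      ψ f ∈ galoisDual p l C := by
    intro f hfS
    rw [hmem_dual]
    rintro y ⟨g, rfl⟩
    have hgoal : ∑ i, Φ (g : Polynomial F) i * (Φ (f : Polynomial F) i) ^ p ^ l = 0 := by
      rw [Finset.sum_congr rfl (fun i _ => hεu (f : Polynomial F) (g : Polynomial F) i)]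
      have hterm : ∀ i : Fin n,
          ε i * (u i * ((g : Polynomial F).eval (a i) * ((f : Polynomial F).map σ).eval (a i)))
          = u i * ((g : Polynomial F).eval (a i) * ((f : Polynomial F).map σ).eval (a i)) := by
        intro i
        by_cases hi : (i : ℕ) < s
        · have h0 : ((f : Polynomial F).map σ).eval (a i) = 0 := by
            rw [← eval_pow_frob p l (a i) (hafix i), hfS i hi]
            exact zero_pow hplne
          rw [h0]
          ring
        · have hone : ε i = 1 := if_neg hi
          rw [hone, one_mul]
      rw [Finset.sum_congr rfl (fun i _ => hterm i)]
      exact key ((f : Polynomial F).map σ) (g : Polynomial F)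
        (lt_of_le_of_lt (degree_map_le) (hmemD f)) (hmemD g)
    exact hgoal
  -- codewords in the dual come from polynomials vanishing on the first s points
  have hsub2 : ∀ f : D, ψ f ∈ galoisDual p l C →
      ∀ j : Fin n, (j : ℕ) < s → (f : Polynomial F).eval (a j) = 0 := by
    intro f hdual j hj
    have hjS : j ∈ univ.filter (fun i : Fin n => (i : ℕ) < s) :=
      Finset.mem_filter.mpr ⟨mem_univ j, hj⟩
    set g : Polynomial F :=
      ∏ i ∈ (univ.filter (fun i : Fin n => (i : ℕ) < s)).erase j, (X - Polynomial.C (a i))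
      with hg_def
    have hgdeg : g.degree < (k : WithBot ℕ) := by
      rw [hg_def, degree_prod]
      rw [Finset.sum_congr rfl (fun i _ => degree_X_sub_C (a i)), Finset.sum_const]
      rw [Finset.card_erase_of_mem hjS, card_filter_fin_lt hsn]
      simp only [nsmul_eq_mul, mul_one]
      exact_mod_cast (by omega : s - 1 < k)
    have hgD : g ∈ D := mem_degreeLT.mpr hgdeg
    have h0 : ∑ i, ψ ⟨g, hgD⟩ i * (ψ f i) ^ p ^ l = 0 :=
      (hmem_dual _).mp hdual _ ⟨⟨g, hgD⟩, rfl⟩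
    have h0' : ∑ i, Φ g i * (Φ (f : Polynomial F) i) ^ p ^ l = 0 := h0
    rw [Finset.sum_congr rfl (fun i _ => hεu (f : Polynomial F) g i)] at h0'
    have hTsum : ∑ i, u i * (g.eval (a i) * ((f : Polynomial F).map σ).eval (a i)) = 0 :=
      key ((f : Polynomial F).map σ) g (lt_of_le_of_lt (degree_map_le) (hmemD f)) hgdeg
    rw [Fintype.sum_eq_add_sum_compl j] at h0' hTsum
    have hterm : ∀ i ∈ ({j} : Finset (Fin n))ᶜ,
        ε i * (u i * (g.eval (a i) * ((f : Polynomial F).map σ).eval (a i)))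
        = u i * (g.eval (a i) * ((f : Polynomial F).map σ).eval (a i)) := by
      intro i hi
      have hij : i ≠ j := by simpa using hi
      by_cases his : (i : ℕ) < s
      · have hgz : g.eval (a i) = 0 := by
          rw [hg_def, eval_prod]
          apply Finset.prod_eq_zero
            (Finset.mem_erase.mpr ⟨hij, Finset.mem_filter.mpr ⟨mem_univ i, his⟩⟩)
          simp
        rw [hgz]
        ring
      · have hone : ε i = 1 := if_neg his
        rw [hone, one_mul]
    have hsumeq : ∑ i ∈ ({j} : Finset (Fin n))ᶜ,
        ε i * (u i * (g.eval (a i) * ((f : Polynomial F).map σ).eval (a i)))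
        = ∑ i ∈ ({j} : Finset (Fin n))ᶜ,
        u i * (g.eval (a i) * ((f : Polynomial F).map σ).eval (a i)) :=
      Finset.sum_congr rfl hterm
    have hTj : ε j * (u j * (g.eval (a j) * ((f : Polynomial F).map σ).eval (a j)))
        = u j * (g.eval (a j) * ((f : Polynomial F).map σ).eval (a j)) := by
      linear_combination h0' - hTsum - hsumeq
    have hεj : ε j = -1 := if_pos hj
    rw [hεj] at hTj
    have hT0 : u j * (g.eval (a j) * ((f : Polynomial F).map σ).eval (a j)) = 0 := by
      have h2 : (2 : F) * (u j * (g.eval (a j) * ((f : Polynomial F).map σ).eval (a j))) = 0 := by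
        linear_combination -hTj
      have h2ne : (2 : F) ≠ 0 := by
        intro hc
        have hdd : (p : ℕ) ∣ 2 := (CharP.cast_eq_zero_iff F p 2).mp (by exact_mod_cast hc)
        have := Nat.le_of_dvd (by norm_num) hdd
        omega
      exact (mul_eq_zero.mp h2).resolve_left h2ne
    have hT0' := hT0
    have hgj : g.eval (a j) ≠ 0 := by
      rw [hg_def, eval_prod]
      apply Finset.prod_ne_zero_iff.mpr
      intro i hi
      simp only [eval_sub, eval_X, eval_C]
      exact sub_ne_zero_of_ne fun hc => (Finset.mem_erase.mp hi).1 ((ha hc).symm)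
    have hfσ : ((f : Polynomial F).map σ).eval (a j) = 0 := by
      rcases mul_eq_zero.mp hT0' with h1 | h1
      · exact absurd h1 (hu0 j)
      · rcases mul_eq_zero.mp h1 with h2 | h2
        · exact absurd h2 hgj
        · exact h2
    rw [← eval_pow_frob p l (a j) (hafix j)] at hfσ
    exact pow_eq_zero_iff hplne |>.mp hfσ
  -- the evaluation map at the first s points
  set ρ : D →ₗ[F] (Fin s → F) :=
    LinearMap.pi (fun j : Fin s => (Polynomial.leval (a (Fin.castLE hsn j))) ∘ₗ D.subtype)
    with hρ_def
  have hρapp : ∀ (f : D) (j : Fin s), ρ f j = (f : Polynomial F).eval (a (Fin.castLE hsn j)) :=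
    fun _ _ => rfl
  have hker : ∀ f : D, f ∈ LinearMap.ker ρ ↔
      ∀ i : Fin n, (i : ℕ) < s → (f : Polynomial F).eval (a i) = 0 := by
    intro f
    rw [LinearMap.mem_ker]
    constructor
    · intro h0 i hi
      have h1 := congrFun h0 ⟨(i : ℕ), hi⟩
      rw [hρapp] at h1
      have harg : Fin.castLE hsn (⟨(i : ℕ), hi⟩ : Fin s) = i := by
        apply Fin.ext
        rfl
      rw [harg] at h1
      simpa using h1
    · intro hall
      funext j
      rw [hρapp]
      have := hall (Fin.castLE hsn j) (by simpa using j.isLt)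
      simpa using this
  have hρsurj : Function.Surjective ρ := by
    intro w
    have hinj' : Set.InjOn (fun j : Fin s => a (Fin.castLE hsn j)) ↑(univ : Finset (Fin s)) := by
      intro x _ y _ hxy
      exact Fin.castLE_injective hsn (ha hxy)
    set P := Lagrange.interpolate univ (fun j : Fin s => a (Fin.castLE hsn j)) w with hP_def
    have hPdeg : P.degree < (k : WithBot ℕ) := by
      refine lt_of_lt_of_le (Lagrange.degree_interpolate_lt w hinj') ?_
      rw [Finset.card_univ, Fintype.card_fin]
      exact_mod_cast hsk
    refine ⟨⟨P, mem_degreeLT.mpr hPdeg⟩, ?_⟩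
    funext j
    rw [hρapp]
    exact Lagrange.eval_interpolate_at_node w hinj' (mem_univ j)
  -- the hull is the image of the kernel of ρ
  have hHull : galoisHull p l C = LinearMap.range (ψ ∘ₗ (LinearMap.ker ρ).subtype) := by
    apply le_antisymm
    · intro x hx
      have hx' : x ∈ C ⊓ galoisDual p l C := hx
      obtain ⟨hxC, hxD⟩ := Submodule.mem_inf.mp hx'
      obtain ⟨f, rfl⟩ := hxC
      refine ⟨⟨f, (hker f).mpr ?_⟩, rfl⟩
      intro i hi
      exact hsub2 f hxD i hi
    · rintro x ⟨⟨f, hf⟩, rfl⟩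
      have hx1 : ψ f ∈ C := ⟨f, rfl⟩
      have hx2 : ψ f ∈ galoisDual p l C := hsub1 f ((hker f).mp hf)
      exact Submodule.mem_inf.mpr ⟨hx1, hx2⟩
  -- rank computations
  have hcomp_inj : Function.Injective ⇑(ψ ∘ₗ (LinearMap.ker ρ).subtype) := by
    rw [LinearMap.coe_comp]
    exact hψinj.comp (Submodule.injective_subtype _)
  have hrn := LinearMap.finrank_range_add_finrank_ker ρ
  have hrange : Module.finrank F (LinearMap.range ρ) = s := by
    rw [LinearMap.range_eq_top.mpr hρsurj, finrank_top, Module.finrank_fin_fun]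
  rw [hDrank, hrange] at hrn
  refine ⟨C, ⟨hCrank, hdist, ⟨ψ ⟨g0, hg0D⟩, hx0C, hx0ne, hx0wt⟩⟩, ?_⟩
  rw [hHull, LinearMap.finrank_range_of_inj hcomp_inj]
  omega
end

section
/- Let q = p^e be a prime power with l dividing e. Let α be a primitive element of F_q, ξ_1 = α^{x_1}, ξ_2 = α^{x_2}, and assume (q−1) | lcm(x_1,x_2) and gcd(x_2, q−1) | x_1(p^l − 1). Let n = r_1 r_2 where 1 ≤ r_1 ≤ ord(ξ_1) and r_2 = ord(ξ_2), and let {a_1,…,a_n} = ∪_{i=1}^{r_1} R_i where R_i = {ξ_1^i ξ_2^j : j = 1,…,r_2} (these n elements are distinct). If a_i ∈ R_s, so a_i = ξ_1^s ξ_2^t for some 1 ≤ t ≤ r_2, then u_i := Π_{1≤j≤n, j≠i} (a_i − a_j)^{−1} satisfies u_i = a_i · ξ_1^{−s r_2} · r_2^{−1} · Π_{1≤s'≤r_1, s'≠s} (ξ_1^{s r_2} − ξ_1^{s' r_2})^{−1}, and moreover a_i^{−1} u_i ∈ F_{p^l}^*. -/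
open Finset
open scoped Classical
set_option maxHeartbeats 1000000

open Polynomial in
private lemma aux_image_erase {α β : Type*} [DecidableEq α] [DecidableEq β] {f : α → β}
    {s : Finset α} (hinj : Set.InjOn f ↑s) {a : α} (ha : a ∈ s) :
    (s.erase a).image f = (s.image f).erase (f a) := by
  ext b
  simp only [Finset.mem_image, Finset.mem_erase]
  constructor
  · rintro ⟨x, ⟨hxa, hxs⟩, rfl⟩
    exact ⟨fun h => hxa (hinj hxs ha h), x, hxs, rfl⟩
  · rintro ⟨hb, x, hxs, rfl⟩
    exact ⟨x, ⟨fun h => hb (by rw [h]), hxs⟩, rfl⟩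

private lemma aux_lcm_gcd {x1 x2 Q : ℕ} (hx1 : x1 ≠ 0) (hx2 : x2 ≠ 0) (hQ : Q ≠ 0)
    (h : Q ∣ Nat.lcm x1 x2) : Nat.lcm (Nat.gcd x1 Q) (Nat.gcd x2 Q) = Q := by
  have hd1 : Nat.gcd x1 Q ≠ 0 := fun h0 => hQ (Nat.eq_zero_of_gcd_eq_zero_right h0)
  have hd2 : Nat.gcd x2 Q ≠ 0 := fun h0 => hQ (Nat.eq_zero_of_gcd_eq_zero_right h0)
  have hlcm0 : Nat.lcm (Nat.gcd x1 Q) (Nat.gcd x2 Q) ≠ 0 := Nat.lcm_ne_zero hd1 hd2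
  have hx120 : Nat.lcm x1 x2 ≠ 0 := Nat.lcm_ne_zero hx1 hx2
  apply Nat.dvd_antisymm
  · exact Nat.lcm_dvd (Nat.gcd_dvd_right _ _) (Nat.gcd_dvd_right _ _)
  · rw [← Nat.factorization_le_iff_dvd hQ hlcm0]
    have hle := (Nat.factorization_le_iff_dvd hQ hx120).mpr h
    rw [Nat.factorization_lcm hx1 hx2] at hle
    rw [Nat.factorization_lcm hd1 hd2, Nat.factorization_gcd hx1 hQ,
      Nat.factorization_gcd hx2 hQ]
    rw [Finsupp.le_def] at hle ⊢
    intro r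
    have h1 := hle r
    simp only [Finsupp.sup_apply, Finsupp.inf_apply] at h1 ⊢
    omega

/-- Lemma 6: let `q = p^e` with `l ∣ e`, `α` a primitive element of `F_q`,
`ξ₁ = α^{x₁}`, `ξ₂ = α^{x₂}`, and assume `(q-1) ∣ lcm(x₁,x₂)` and
`gcd(x₂, q-1) ∣ x₁(p^l - 1)`.  With `r₂ = ord(ξ₂)`, `1 ≤ r₁ ≤ ord(ξ₁)` and `n = r₁ r₂`,
the set `𝒜 = ⋃_{s=1}^{r₁} {ξ₁^s ξ₂^t : 1 ≤ t ≤ r₂}` consists of `n` distinct elements, and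
for each `a = ξ₁^s ξ₂^t ∈ 𝒜` the quantity `u = ∏_{b ∈ 𝒜, b ≠ a} (a - b)⁻¹` equals
`a ξ₁^{-s r₂} r₂⁻¹ ∏_{s' ≠ s} (ξ₁^{s r₂} - ξ₁^{s' r₂})⁻¹`, and `a⁻¹ u ∈ F_{p^l}^*`
(i.e. `a⁻¹ u` is nonzero and fixed by the `p^l`-power Frobenius). -/
theorem prod_inv_sub_eq_of_union_cosets (p e l x1 x2 r1 : ℕ) [Fact p.Prime] (he : 0 < e)
    (hle : l ∣ e) (α : GaloisField p e) (hα : orderOf α = p ^ e - 1)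
    (hx1 : 0 < x1) (hx2 : 0 < x2)
    (hlcm : (p ^ e - 1) ∣ Nat.lcm x1 x2)
    (hgcd : Nat.gcd x2 (p ^ e - 1) ∣ x1 * (p ^ l - 1))
    (hr1 : 1 ≤ r1) (hr1' : r1 ≤ orderOf (α ^ x1)) :
    let ξ1 : GaloisField p e := α ^ x1
    let ξ2 : GaloisField p e := α ^ x2
    let r2 : ℕ := orderOf ξ2
    let A : Finset (GaloisField p e) :=
      (Finset.Icc 1 r1 ×ˢ Finset.Icc 1 r2).image fun st => ξ1 ^ st.1 * ξ2 ^ st.2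
    A.card = r1 * r2 ∧
      ∀ s ∈ Finset.Icc 1 r1, ∀ t ∈ Finset.Icc 1 r2,
        (∏ b ∈ A.erase (ξ1 ^ s * ξ2 ^ t), (ξ1 ^ s * ξ2 ^ t - b)⁻¹) =
            ξ1 ^ s * ξ2 ^ t * (ξ1 ^ (s * r2))⁻¹ * (r2 : GaloisField p e)⁻¹ *
              ∏ s' ∈ (Finset.Icc 1 r1).erase s, (ξ1 ^ (s * r2) - ξ1 ^ (s' * r2))⁻¹ ∧
          (ξ1 ^ s * ξ2 ^ t)⁻¹ *
              (∏ b ∈ A.erase (ξ1 ^ s * ξ2 ^ t), (ξ1 ^ s * ξ2 ^ t - b)⁻¹) ≠ 0 ∧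
          ((ξ1 ^ s * ξ2 ^ t)⁻¹ *
              (∏ b ∈ A.erase (ξ1 ^ s * ξ2 ^ t), (ξ1 ^ s * ξ2 ^ t - b)⁻¹)) ^ p ^ l =
            (ξ1 ^ s * ξ2 ^ t)⁻¹ *
              (∏ b ∈ A.erase (ξ1 ^ s * ξ2 ^ t), (ξ1 ^ s * ξ2 ^ t - b)⁻¹) := by
  intro ξ1 ξ2 r2 A
  have hp : p.Prime := Fact.out
  have hq2 : 2 ≤ p ^ e := by
    calc 2 ≤ p := hp.two_le
    _ = p ^ 1 := (pow_one p).symm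
    _ ≤ p ^ e := Nat.pow_le_pow_right hp.pos he
  set Q := p ^ e - 1 with hQdef
  have hQ0 : Q ≠ 0 := by omega
  have hα0 : α ≠ 0 := by
    intro h
    have h1 := pow_orderOf_eq_one α
    rw [hα, h, zero_pow hQ0] at h1
    exact zero_ne_one h1
  have hξ10 : ξ1 ≠ 0 := pow_ne_zero _ hα0
  have hξ20 : ξ2 ≠ 0 := pow_ne_zero _ hα0
  -- units bookkeeping
  have hmodgen : ∀ (x : (GaloisField p e)ˣ) (u v : ℕ),
      ((x : GaloisField p e)) ^ u = (x : GaloisField p e) ^ v ↔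
        ((orderOf (x : GaloisField p e) : ℤ)) ∣ (u : ℤ) - (v : ℤ) := by
    intro x u v
    rw [orderOf_units, ← Units.val_pow_eq_pow_val, ← Units.val_pow_eq_pow_val,
      ← Units.ext_iff, pow_eq_pow_iff_modEq, Nat.modEq_iff_dvd, ← orderOf_units (y := x)]
    exact dvd_sub_comm
  have hQiff : ∀ u v : ℕ, α ^ u = α ^ v ↔ (Q : ℤ) ∣ (u : ℤ) - (v : ℤ) := by
    intro u v
    have := hmodgen (Units.mk0 α hα0) u v
    simpa [hα] using this
  have h1iff : ∀ u v : ℕ, ξ1 ^ u = ξ1 ^ v ↔ ((orderOf ξ1 : ℤ)) ∣ (u : ℤ) - (v : ℤ) := by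
    intro u v
    simpa using hmodgen (Units.mk0 ξ1 hξ10) u v
  have h2iff : ∀ u v : ℕ, ξ2 ^ u = ξ2 ^ v ↔ ((r2 : ℤ)) ∣ (u : ℤ) - (v : ℤ) := by
    intro u v
    simpa using hmodgen (Units.mk0 ξ2 hξ20) u v
  -- order of ξ2
  set d1 := Nat.gcd x1 Q with hd1def
  set d2 := Nat.gcd x2 Q with hd2def
  have hr2d2 : r2 * d2 = Q := by
    have h1 : orderOf (Units.mk0 α hα0 ^ x2) =
        orderOf (Units.mk0 α hα0) / Nat.gcd (orderOf (Units.mk0 α hα0)) x2 := orderOf_pow _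
    have h2 : orderOf (Units.mk0 α hα0) = Q := by
      rw [← orderOf_units]; simpa using hα
    have h3 : r2 = Q / Nat.gcd Q x2 := by
      have h4 : r2 = orderOf (Units.mk0 α hα0 ^ x2) := by
        rw [← orderOf_units]
        simp only [Units.val_pow_eq_pow_val, Units.val_mk0]
        rfl
      rw [h4, h1, h2]
    rw [h3, hd2def, Nat.gcd_comm x2 Q]
    exact Nat.div_mul_cancel (Nat.gcd_dvd_left Q x2)
  have hr2Q : r2 ∣ Q := ⟨d2, hr2d2.symm⟩
  have hr2pos : 0 < r2 := by
    rcases Nat.eq_zero_or_pos r2 with h | h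
    · rw [h, zero_mul] at hr2d2; omega
    · exact h
  have hlcmQ : Nat.lcm d1 d2 = Q := aux_lcm_gcd hx1.ne' hx2.ne' hQ0 hlcm
  -- integer divisibility helpers
  have hd1x : (d1 : ℤ) ∣ (x1 : ℤ) := Int.natCast_dvd_natCast.mpr (Nat.gcd_dvd_left _ _)
  have hd2x : (d2 : ℤ) ∣ (x2 : ℤ) := Int.natCast_dvd_natCast.mpr (Nat.gcd_dvd_left _ _)
  have hd2Q : (d2 : ℤ) ∣ (Q : ℤ) := Int.natCast_dvd_natCast.mpr (Nat.gcd_dvd_right _ _)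
  have hlcmdvd : ∀ z : ℤ, (d1 : ℤ) ∣ z → (d2 : ℤ) ∣ z → (Q : ℤ) ∣ z := by
    intro z h1 h2
    have h3 : ((Int.lcm (d1 : ℤ) (d2 : ℤ) : ℕ) : ℤ) ∣ z :=
      Int.natCast_dvd.mpr (Nat.lcm_dvd (Int.natCast_dvd.mp h1) (Int.natCast_dvd.mp h2))
    have h4 : Int.lcm (d1 : ℤ) (d2 : ℤ) = Nat.lcm d1 d2 := by
      simp [Int.lcm]
    rwa [h4, hlcmQ] at h3
  have hQpair : ∀ m k : ℤ, (Q : ℤ) ∣ (x1 : ℤ) * m + (x2 : ℤ) * k →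
      (Q : ℤ) ∣ (x1 : ℤ) * m ∧ (Q : ℤ) ∣ (x2 : ℤ) * k := by
    intro m k h
    have ha : (d2 : ℤ) ∣ (x2 : ℤ) * k := hd2x.mul_right k
    have hb : (d2 : ℤ) ∣ (x1 : ℤ) * m + (x2 : ℤ) * k := dvd_trans hd2Q h
    have h2 := hb.sub ha
    rw [add_sub_cancel_right] at h2
    have hQ1 : (Q : ℤ) ∣ (x1 : ℤ) * m := hlcmdvd _ (hd1x.mul_right m) h2
    refine ⟨hQ1, ?_⟩
    have h3 := h.sub hQ1
    rwa [add_sub_cancel_left] at h3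
  have hcancel_r2 : ∀ z : ℤ, (Q : ℤ) ∣ (x1 : ℤ) * z * (r2 : ℤ) → (Q : ℤ) ∣ (x1 : ℤ) * z := by
    intro z h
    have hQr : (Q : ℤ) = (d2 : ℤ) * (r2 : ℤ) := by
      rw [mul_comm]; exact_mod_cast hr2d2.symm
    have h1 : (d2 : ℤ) * (r2 : ℤ) ∣ (x1 : ℤ) * z * (r2 : ℤ) := hQr ▸ h
    have h2 : (d2 : ℤ) ∣ (x1 : ℤ) * z :=
      (mul_dvd_mul_iff_right (by exact_mod_cast hr2pos.ne' : (r2 : ℤ) ≠ 0)).mp h1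
    exact hlcmdvd _ (hd1x.mul_right z) h2
  -- cancellation of exponents
  have hs_eq : ∀ s s' : ℕ, s ∈ Finset.Icc 1 r1 → s' ∈ Finset.Icc 1 r1 →
      (Q : ℤ) ∣ (x1 : ℤ) * ((s : ℤ) - (s' : ℤ)) → s = s' := by
    intro s s' hs hs' hdvd
    have hc : ((x1 * s : ℕ) : ℤ) - ((x1 * s' : ℕ) : ℤ) = (x1 : ℤ) * ((s : ℤ) - s') := by
      push_cast; ring
    have h1 : α ^ (x1 * s) = α ^ (x1 * s') := (hQiff _ _).mpr (by rw [hc]; exact hdvd)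
    have h2 : ξ1 ^ s = ξ1 ^ s' := by
      rw [pow_mul, pow_mul] at h1; exact h1
    have h3 := (h1iff s s').mp h2
    simp only [Finset.mem_Icc] at hs hs'
    have hord : (r1 : ℤ) ≤ (orderOf ξ1 : ℤ) := by exact_mod_cast hr1'
    have h4 := Int.eq_zero_of_abs_lt_dvd h3 (by rw [abs_lt]; constructor <;> omega)
    omega
  have ht_eq : ∀ t t' : ℕ, t ∈ Finset.Icc 1 r2 → t' ∈ Finset.Icc 1 r2 →
      ξ2 ^ t = ξ2 ^ t' → t = t' := by
    intro t t' ht ht' h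
    have h3 := (h2iff t t').mp h
    simp only [Finset.mem_Icc] at ht ht'
    have h4 := Int.eq_zero_of_abs_lt_dvd h3 (by rw [abs_lt]; constructor <;> omega)
    omega
  -- injectivity of the parametrization
  have hkey : ∀ s t s' t' : ℕ, s ∈ Finset.Icc 1 r1 → s' ∈ Finset.Icc 1 r1 →
      t ∈ Finset.Icc 1 r2 → t' ∈ Finset.Icc 1 r2 →
      ξ1 ^ s * ξ2 ^ t = ξ1 ^ s' * ξ2 ^ t' → s = s' ∧ t = t' := by
    intro s t s' t' hs hs' ht ht' heq
    have heq' : α ^ (x1 * s + x2 * t) = α ^ (x1 * s' + x2 * t') := by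
      rw [pow_add, pow_add, pow_mul, pow_mul, pow_mul, pow_mul]
      exact heq
    have hd := (hQiff _ _).mp heq'
    have hc : ((x1 * s + x2 * t : ℕ) : ℤ) - ((x1 * s' + x2 * t' : ℕ) : ℤ) =
        (x1 : ℤ) * ((s : ℤ) - s') + (x2 : ℤ) * ((t : ℤ) - t') := by push_cast; ring
    rw [hc] at hd
    obtain ⟨hma, hmb⟩ := hQpair _ _ hd
    refine ⟨hs_eq s s' hs hs' hma, ?_⟩
    apply ht_eq t t' ht ht'
    have hc2 : ((x2 * t : ℕ) : ℤ) - ((x2 * t' : ℕ) : ℤ) = (x2 : ℤ) * ((t : ℤ) - t') := by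
      push_cast; ring
    have h1 : α ^ (x2 * t) = α ^ (x2 * t') := (hQiff _ _).mpr (by rw [hc2]; exact hmb)
    rw [pow_mul, pow_mul] at h1
    exact h1
  have hinjS : Set.InjOn (fun st : ℕ × ℕ => ξ1 ^ st.1 * ξ2 ^ st.2)
      ↑(Finset.Icc 1 r1 ×ˢ Finset.Icc 1 r2) := by
    rintro ⟨s, t⟩ hst ⟨s', t'⟩ hst' h
    simp only [Finset.coe_product, Set.mem_prod, Finset.mem_coe] at hst hst'
    obtain ⟨h1, h2⟩ := hkey s t s' t' hst.1 hst'.1 hst.2 hst'.2 h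
    exact Prod.ext h1 h2
  have hinj2 : Set.InjOn (fun v : ℕ => ξ2 ^ v) ↑(Finset.Icc 1 r2) := by
    intro t ht t' ht' h
    exact ht_eq t t' ht ht' h
  -- roots of unity
  have hξ2r2 : ξ2 ^ r2 = 1 := pow_orderOf_eq_one ξ2
  have hprim : IsPrimitiveRoot ξ2 r2 := IsPrimitiveRoot.orderOf ξ2
  set μ := Polynomial.nthRootsFinset r2 (1 : GaloisField p e) with hμdef
  have himg : (Finset.Icc 1 r2).image (fun v => ξ2 ^ v) = μ := by
    apply Finset.eq_of_subset_of_card_le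
    · intro b hb
      simp only [Finset.mem_image] at hb
      obtain ⟨t', _, rfl⟩ := hb
      rw [hμdef, Polynomial.mem_nthRootsFinset hr2pos, ← pow_mul, mul_comm, pow_mul,
        hξ2r2, one_pow]
    · rw [hprim.card_nthRootsFinset, Finset.card_image_of_injOn hinj2]
      simp [Nat.card_Icc]
  have hμprod : ∀ z : GaloisField p e, ∏ ζ ∈ μ, (z - ζ) = z ^ r2 - 1 := by
    intro z
    have h1 := Polynomial.X_pow_sub_one_eq_prod hr2pos hprim
    have h2 := congrArg (Polynomial.eval z) h1
    simpa [Polynomial.eval_prod] using h2.symm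
  have hone_mem : (1 : GaloisField p e) ∈ μ := Polynomial.one_mem_nthRootsFinset hr2pos
  have hgeom : ∏ ζ ∈ μ.erase 1, ((1 : GaloisField p e) - ζ) = (r2 : GaloisField p e) := by
    have h1 : ((Polynomial.X : Polynomial (GaloisField p e)) ^ r2 - 1) =
        (Polynomial.X - Polynomial.C 1) * ∏ ζ ∈ μ.erase 1, (Polynomial.X - Polynomial.C ζ) := by
      rw [Polynomial.X_pow_sub_one_eq_prod hr2pos hprim]
      exact (Finset.mul_prod_erase μ _ hone_mem).symm
    have h2 : ((Polynomial.X : Polynomial (GaloisField p e)) ^ r2 - 1) =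
        (Polynomial.X - Polynomial.C 1) * ∑ i ∈ Finset.range r2, Polynomial.X ^ i := by
      rw [Polynomial.C_1, mul_comm]
      exact (geom_sum_mul Polynomial.X r2).symm
    have hXne : (Polynomial.X : Polynomial (GaloisField p e)) - Polynomial.C 1 ≠ 0 :=
      Polynomial.X_sub_C_ne_zero 1
    have h3 : ∏ ζ ∈ μ.erase 1, ((Polynomial.X : Polynomial (GaloisField p e)) - Polynomial.C ζ) =
        ∑ i ∈ Finset.range r2, Polynomial.X ^ i := by
      apply mul_left_cancel₀ hXne
      rw [← h1, ← h2]
    have h4 := congrArg (Polynomial.eval 1) h3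
    simpa [Polynomial.eval_prod, Polynomial.eval_finset_sum] using h4
  have hG : ∀ θ : GaloisField p e, θ ∈ μ →
      ∏ ζ ∈ μ.erase θ, (θ - ζ) = (r2 : GaloisField p e) * θ ^ (r2 - 1) := by
    intro θ hθ
    have hθ0 : θ ≠ 0 := Polynomial.ne_zero_of_mem_nthRootsFinset one_ne_zero hθ
    have hθr : θ ^ r2 = 1 := (Polynomial.mem_nthRootsFinset hr2pos 1).mp hθ
    have hset : μ.erase θ = (μ.erase 1).image (fun ζ' => θ * ζ') := by
      ext ζ
      simp only [Finset.mem_erase, Finset.mem_image]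
      constructor
      · rintro ⟨hne, hζ⟩
        refine ⟨θ⁻¹ * ζ, ⟨?_, ?_⟩, by field_simp⟩
        · intro h
          apply hne
          have h9 : θ * (θ⁻¹ * ζ) = θ * 1 := by rw [h]
          rwa [mul_one, ← mul_assoc, mul_inv_cancel₀ hθ0, one_mul] at h9
        · rw [hμdef, Polynomial.mem_nthRootsFinset hr2pos, mul_pow, inv_pow, hθr,
            (Polynomial.mem_nthRootsFinset hr2pos 1).mp hζ, inv_one, one_mul]
      · rintro ⟨ζ', ⟨hne, hζ'⟩, rfl⟩
        constructor
        · intro h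
          apply hne
          have := mul_left_cancel₀ hθ0 (h.trans (mul_one θ).symm)
          exact this
        · have h := Polynomial.mul_mem_nthRootsFinset hθ hζ'; rwa [mul_one] at h
    rw [hset, Finset.prod_image (fun a _ b _ h => mul_left_cancel₀ hθ0 h)]
    have hcongr : ∀ ζ' ∈ μ.erase 1, θ - θ * ζ' = θ * (1 - ζ') := by
      intro ζ' _; ring
    rw [Finset.prod_congr rfl hcongr, Finset.prod_mul_distrib, Finset.prod_const, hgeom,
      Finset.card_erase_of_mem hone_mem, hprim.card_nthRootsFinset]
    ring
  have hC : ∀ y c : GaloisField p e, c ≠ 0 →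
      ∏ t' ∈ Finset.Icc 1 r2, (y - c * ξ2 ^ t') = y ^ r2 - c ^ r2 := by
    intro y c hc
    have h1 : ∏ t' ∈ Finset.Icc 1 r2, (y - c * ξ2 ^ t') = ∏ ζ ∈ μ, (y - c * ζ) := by
      rw [← himg, Finset.prod_image hinj2]
    rw [h1]
    have hcongr : ∀ ζ ∈ μ, y - c * ζ = c * (y / c - ζ) := by
      intro ζ _; field_simp
    rw [Finset.prod_congr rfl hcongr, Finset.prod_mul_distrib, Finset.prod_const,
      hprim.card_nthRootsFinset, hμprod (y / c)]
    field_simp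
    rw [div_pow, mul_sub, mul_one]; congr 1; field_simp
  -- nonzero cast of r2
  have hr2F : (r2 : GaloisField p e) ≠ 0 := by
    rw [Ne, CharP.cast_eq_zero_iff (GaloisField p e) p]
    intro hdvd
    have h1 : p ∣ Q := dvd_trans hdvd hr2Q
    have h2 : p ∣ p ^ e := dvd_pow_self p he.ne'
    have h3 := Nat.dvd_sub h2 h1
    rw [show p ^ e - Q = 1 by omega] at h3
    have := Nat.dvd_one.mp h3
    have := hp.two_le
    omega
  -- Frobenius fact
  have hQfrob : Q ∣ x1 * r2 * (p ^ l - 1) := by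
    have h2 : r2 * d2 ∣ r2 * (x1 * (p ^ l - 1)) := mul_dvd_mul_left r2 hgcd
    rw [hr2d2] at h2
    rwa [show r2 * (x1 * (p ^ l - 1)) = x1 * r2 * (p ^ l - 1) by ring] at h2
  have hpl1 : 1 ≤ p ^ l := Nat.one_le_pow _ _ hp.pos
  have hβ : ∀ m : ℕ, (ξ1 ^ (m * r2)) ^ (p ^ l) = ξ1 ^ (m * r2) := by
    intro m
    have h1 : ξ1 ^ (m * r2) = α ^ (x1 * (m * r2)) := (pow_mul α x1 (m * r2)).symm
    rw [h1, ← pow_mul]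
    apply (hQiff _ _).mpr
    have hc : ((x1 * (m * r2) * p ^ l : ℕ) : ℤ) - ((x1 * (m * r2) : ℕ) : ℤ) =
        ((x1 * r2 * (p ^ l - 1) : ℕ) : ℤ) * (m : ℤ) := by
      push_cast [Nat.cast_sub hpl1]
      ring
    rw [hc]
    exact (Int.natCast_dvd_natCast.mpr hQfrob).mul_right m
  have hr2cast : ((r2 : GaloisField p e)) ^ (p ^ l) = (r2 : GaloisField p e) := by
    have h1 := map_natCast (iterateFrobenius (GaloisField p e) p l) r2
    rwa [iterateFrobenius_def] at h1
  -- Conclusion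
  constructor
  · rw [Finset.card_image_of_injOn hinjS, Finset.card_product]
    simp [Nat.card_Icc]
  intro s hs t ht
  set a := ξ1 ^ s * ξ2 ^ t with hadef
  have ha0 : a ≠ 0 := mul_ne_zero (pow_ne_zero _ hξ10) (pow_ne_zero _ hξ20)
  have haR : a ^ r2 = ξ1 ^ (s * r2) := by
    have h1 : (ξ2 ^ t) ^ r2 = 1 := by
      rw [← pow_mul, mul_comm, pow_mul, hξ2r2, one_pow]
    rw [hadef, mul_pow, h1, mul_one, ← pow_mul]
  have hstS : (s, t) ∈ Finset.Icc 1 r1 ×ˢ Finset.Icc 1 r2 := Finset.mem_product.mpr ⟨hs, ht⟩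
  have hAerase : A.erase a =
      ((Finset.Icc 1 r1 ×ˢ Finset.Icc 1 r2).erase (s, t)).image
        (fun st : ℕ × ℕ => ξ1 ^ st.1 * ξ2 ^ st.2) :=
    (aux_image_erase hinjS hstS).symm
  have hsplit : (Finset.Icc 1 r1 ×ˢ Finset.Icc 1 r2).erase (s, t) =
      ((Finset.Icc 1 r1).erase s ×ˢ Finset.Icc 1 r2) ∪
        ({s} ×ˢ (Finset.Icc 1 r2).erase t) := by
    ext ⟨u, v⟩
    simp only [Finset.mem_erase, Finset.mem_product, Finset.mem_union, Finset.mem_singleton,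
      Prod.mk.injEq, Ne, not_and]
    constructor
    · rintro ⟨hne, hu, hv⟩
      by_cases hus : u = s
      · subst hus
        exact Or.inr ⟨rfl, fun h => (hne rfl h).elim, hv⟩
      · exact Or.inl ⟨⟨hus, hu⟩, hv⟩
    · rintro (⟨⟨hus, hu⟩, hv⟩ | ⟨rfl, hvt, hv⟩)
      · exact ⟨fun h => absurd h hus, hu, hv⟩
      · exact ⟨fun _ h => hvt h, Finset.mem_Icc.mp hs |>.1 |> fun _ => hs, hv⟩
  have hdisj : Disjoint ((Finset.Icc 1 r1).erase s ×ˢ Finset.Icc 1 r2)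
      ({s} ×ˢ (Finset.Icc 1 r2).erase t) := by
    rw [Finset.disjoint_left]
    rintro ⟨u, v⟩ h1 h2
    simp only [Finset.mem_product, Finset.mem_erase, Finset.mem_singleton] at h1 h2
    exact h1.1.1 h2.1
  have hmemμ : ξ2 ^ t ∈ μ := by
    rw [hμdef, Polynomial.mem_nthRootsFinset hr2pos, ← pow_mul, mul_comm, pow_mul, hξ2r2,
      one_pow]
  have hP : ∏ b ∈ A.erase a, (a - b) =
      (∏ u ∈ (Finset.Icc 1 r1).erase s, (ξ1 ^ (s * r2) - ξ1 ^ (u * r2))) *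
        ((r2 : GaloisField p e) * a ^ (r2 - 1)) := by
    rw [hAerase,
      Finset.prod_image (hinjS.mono (Finset.coe_subset.mpr (Finset.erase_subset _ _))),
      hsplit, Finset.prod_union hdisj]
    congr 1
    · rw [Finset.prod_product]
      apply Finset.prod_congr rfl
      intro u _
      have h1 : ∏ v ∈ Finset.Icc 1 r2, (a - ξ1 ^ u * ξ2 ^ v) = a ^ r2 - (ξ1 ^ u) ^ r2 :=
        hC a (ξ1 ^ u) (pow_ne_zero _ hξ10)
      rw [h1, haR, ← pow_mul ξ1 u r2]
    · rw [Finset.prod_product, Finset.prod_singleton]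
      have himgE : ((Finset.Icc 1 r2).erase t).image (fun v => ξ2 ^ v) = μ.erase (ξ2 ^ t) := by
        rw [aux_image_erase hinj2 ht, himg]
      calc ∏ v ∈ (Finset.Icc 1 r2).erase t, (a - ξ1 ^ s * ξ2 ^ v)
          = ∏ ζ ∈ μ.erase (ξ2 ^ t), (a - ξ1 ^ s * ζ) := by
            rw [← himgE,
              Finset.prod_image (hinj2.mono (Finset.coe_subset.mpr (Finset.erase_subset _ _)))]
        _ = ∏ ζ ∈ μ.erase (ξ2 ^ t), (ξ1 ^ s * (ξ2 ^ t - ζ)) := by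
            apply Finset.prod_congr rfl
            intro ζ _
            rw [hadef]; ring
        _ = (ξ1 ^ s) ^ (μ.erase (ξ2 ^ t)).card * ∏ ζ ∈ μ.erase (ξ2 ^ t), (ξ2 ^ t - ζ) := by
            rw [Finset.prod_mul_distrib, Finset.prod_const]
        _ = (r2 : GaloisField p e) * a ^ (r2 - 1) := by
            rw [hG (ξ2 ^ t) hmemμ, Finset.card_erase_of_mem hmemμ,
              hprim.card_nthRootsFinset, hadef, mul_pow]
            ring
  have hΔu : ∀ u ∈ (Finset.Icc 1 r1).erase s, ξ1 ^ (s * r2) - ξ1 ^ (u * r2) ≠ 0 := by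
    intro u hu
    rw [sub_ne_zero]
    intro hEq
    have hu' := Finset.mem_erase.mp hu
    have hα2 : α ^ (x1 * (s * r2)) = α ^ (x1 * (u * r2)) := by
      rw [pow_mul α x1 (s * r2), pow_mul α x1 (u * r2)]
      exact hEq
    have hdv := (hQiff _ _).mp hα2
    have hc : ((x1 * (s * r2) : ℕ) : ℤ) - ((x1 * (u * r2) : ℕ) : ℤ) =
        (x1 : ℤ) * ((s : ℤ) - (u : ℤ)) * (r2 : ℤ) := by push_cast; ring
    rw [hc] at hdv
    have h5 := hcancel_r2 _ hdv
    exact hu'.1 (hs_eq u s hu'.2 hs (by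
      have : (x1 : ℤ) * ((u : ℤ) - (s : ℤ)) = -((x1 : ℤ) * ((s : ℤ) - (u : ℤ))) := by ring
      rw [this]
      exact h5.neg_right))
  have hprod_ne : ∏ u ∈ (Finset.Icc 1 r1).erase s, (ξ1 ^ (s * r2) - ξ1 ^ (u * r2)) ≠ 0 :=
    Finset.prod_ne_zero_iff.mpr hΔu
  have hgoal1 : (∏ b ∈ A.erase a, (a - b)⁻¹) =
      a * (ξ1 ^ (s * r2))⁻¹ * (r2 : GaloisField p e)⁻¹ *
        ∏ u ∈ (Finset.Icc 1 r1).erase s, (ξ1 ^ (s * r2) - ξ1 ^ (u * r2))⁻¹ := by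
    rw [Finset.prod_inv_distrib, Finset.prod_inv_distrib, hP]
    have hane : a ^ (r2 - 1) ≠ 0 := pow_ne_zero _ ha0
    rw [← haR] at hprod_ne ⊢
    have hpow : a ^ r2 = a ^ (r2 - 1) * a := by
      rw [← pow_succ]
      congr 1
      omega
    rw [hpow] at hprod_ne ⊢
    have h9 : ∀ D R B : GaloisField p e, D ≠ 0 → R ≠ 0 → B ≠ 0 →
        (D * (R * B))⁻¹ = a * (B * a)⁻¹ * R⁻¹ * D⁻¹ := by
      intro D R B hD hR hB
      field_simp
    exact h9 _ _ _ hprod_ne hr2F hane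
  refine ⟨hgoal1, ?_, ?_⟩
  · apply mul_ne_zero (inv_ne_zero ha0)
    rw [Finset.prod_inv_distrib]
    apply inv_ne_zero
    apply Finset.prod_ne_zero_iff.mpr
    intro b hb
    exact sub_ne_zero.mpr (Ne.symm (Finset.mem_erase.mp hb).1)
  · rw [hgoal1]
    have hXeq : a⁻¹ * (a * (ξ1 ^ (s * r2))⁻¹ * (r2 : GaloisField p e)⁻¹ *
        ∏ u ∈ (Finset.Icc 1 r1).erase s, (ξ1 ^ (s * r2) - ξ1 ^ (u * r2))⁻¹) =
        (ξ1 ^ (s * r2))⁻¹ * (r2 : GaloisField p e)⁻¹ *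
          ∏ u ∈ (Finset.Icc 1 r1).erase s, (ξ1 ^ (s * r2) - ξ1 ^ (u * r2))⁻¹ := by
      rw [show a * (ξ1 ^ (s * r2))⁻¹ * (r2 : GaloisField p e)⁻¹ *
          ∏ u ∈ (Finset.Icc 1 r1).erase s, (ξ1 ^ (s * r2) - ξ1 ^ (u * r2))⁻¹ =
          a * ((ξ1 ^ (s * r2))⁻¹ * (r2 : GaloisField p e)⁻¹ *
            ∏ u ∈ (Finset.Icc 1 r1).erase s, (ξ1 ^ (s * r2) - ξ1 ^ (u * r2))⁻¹) by ring]
      rw [← mul_assoc, inv_mul_cancel₀ ha0, one_mul]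
    rw [hXeq]
    calc ((ξ1 ^ (s * r2))⁻¹ * (r2 : GaloisField p e)⁻¹ *
          ∏ u ∈ (Finset.Icc 1 r1).erase s, (ξ1 ^ (s * r2) - ξ1 ^ (u * r2))⁻¹) ^ p ^ l
        = ((ξ1 ^ (s * r2)) ^ p ^ l)⁻¹ * ((r2 : GaloisField p e) ^ p ^ l)⁻¹ *
          ∏ u ∈ (Finset.Icc 1 r1).erase s,
            ((ξ1 ^ (s * r2) - ξ1 ^ (u * r2)) ^ p ^ l)⁻¹ := by
          rw [mul_pow, mul_pow, inv_pow, inv_pow, ← Finset.prod_pow]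
          simp_rw [inv_pow]
      _ = (ξ1 ^ (s * r2))⁻¹ * (r2 : GaloisField p e)⁻¹ *
          ∏ u ∈ (Finset.Icc 1 r1).erase s, (ξ1 ^ (s * r2) - ξ1 ^ (u * r2))⁻¹ := by
          rw [hβ s, hr2cast]
          congr 1
          apply Finset.prod_congr rfl
          intro u _
          rw [sub_pow_char_pow, hβ s, hβ u]
end

section
/- Let q = p^e be a prime power with l dividing e, and let x_1, x_2 be positive integers. Then the following two statements are equivalent: (1) (q−1) | lcm(x_1, x_2) and gcd(x_2, q−1) | x_1(p^l − 1); (2) (q−1) | lcm(x_1, x_2) and (q−1)/(p^l − 1) divides x_1. -/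
lemma aux_dvd_lcm_gcd {n x1 x2 : ℕ} (hn : 0 < n) (hx1 : 0 < x1) (hx2 : 0 < x2)
    (h : n ∣ Nat.lcm x1 x2) : n ∣ Nat.lcm (Nat.gcd n x1) (Nat.gcd n x2) := by
  have hg1 : Nat.gcd n x1 ≠ 0 := Nat.gcd_ne_zero_left hn.ne'
  have hg2 : Nat.gcd n x2 ≠ 0 := Nat.gcd_ne_zero_left hn.ne'
  have hL : Nat.lcm x1 x2 ≠ 0 := Nat.lcm_ne_zero hx1.ne' hx2.ne'
  have hLg : Nat.lcm (Nat.gcd n x1) (Nat.gcd n x2) ≠ 0 := Nat.lcm_ne_zero hg1 hg2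
  rw [← Nat.factorization_le_iff_dvd hn.ne' hL, Nat.factorization_lcm hx1.ne' hx2.ne'] at h
  rw [← Nat.factorization_le_iff_dvd hn.ne' hLg, Nat.factorization_lcm hg1 hg2,
    Nat.factorization_gcd hn.ne' hx1.ne', Nat.factorization_gcd hn.ne' hx2.ne']
  intro q
  have hq := h q
  simp only [Finsupp.sup_apply, Finsupp.inf_apply] at *
  omega

/-- Lemma 7: for `q = p^e` with `l ∣ e` and positive integers `x₁, x₂`,
the conditions `(q-1) ∣ lcm(x₁,x₂) ∧ gcd(x₂, q-1) ∣ x₁(p^l - 1)` and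
`(q-1) ∣ lcm(x₁,x₂) ∧ (q-1)/(p^l - 1) ∣ x₁` are equivalent. -/
theorem dvd_lcm_and_gcd_dvd_iff (p e l : ℕ) [Fact p.Prime] (he : 0 < e) (hle : l ∣ e)
    (x1 x2 : ℕ) (hx1 : 0 < x1) (hx2 : 0 < x2) :
    ((p ^ e - 1) ∣ Nat.lcm x1 x2 ∧ Nat.gcd x2 (p ^ e - 1) ∣ x1 * (p ^ l - 1)) ↔
      ((p ^ e - 1) ∣ Nat.lcm x1 x2 ∧ (p ^ e - 1) / (p ^ l - 1) ∣ x1) := by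
  have hp : 2 ≤ p := (Fact.out : p.Prime).two_le
  have hl : 0 < l := Nat.pos_of_dvd_of_pos hle he
  have hd0 : 0 < p ^ l - 1 := by
    have : 2 ≤ p ^ l := le_trans hp (Nat.le_self_pow hl.ne' p)
    omega
  have hn0 : 0 < p ^ e - 1 := by
    have : 2 ≤ p ^ e := le_trans hp (Nat.le_self_pow he.ne' p)
    omega
  have hd : (p ^ l - 1) ∣ (p ^ e - 1) := by
    obtain ⟨k, rfl⟩ := hle
    simpa only [one_pow, pow_mul] using Nat.sub_dvd_pow_sub_pow (p ^ l) 1 k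
  have key : (p ^ e - 1) / (p ^ l - 1) ∣ x1 ↔ (p ^ e - 1) ∣ x1 * (p ^ l - 1) := by
    rw [Nat.div_dvd_iff_dvd_mul hd hd0, Nat.mul_comm]
  constructor
  · rintro ⟨h1, h2⟩
    refine ⟨h1, key.mpr ?_⟩
    have := aux_dvd_lcm_gcd hn0 hx1 hx2 h1
    refine this.trans (Nat.lcm_dvd ?_ ?_)
    · exact ((Nat.gcd_dvd_right _ _)).trans (Dvd.intro _ rfl)
    · rwa [Nat.gcd_comm]
  · rintro ⟨h1, h2⟩
    exact ⟨h1, (Nat.gcd_dvd_right _ _).trans (key.mp h2)⟩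
end

section
/- Let q = p^e with p an odd prime, and assume 2l | e. Let x_1, x_2 be positive integers with (q−1) | lcm(x_1, x_2) and (q−1)/(p^l − 1) | x_1. Let n = r(q−1)/gcd(x_2, q−1) where 1 ≤ r ≤ (q−1)/gcd(x_1, q−1). Then for any 1 ≤ k ≤ ⌊(p^l + n)/(p^l + 1)⌋ and any 0 ≤ h ≤ k, there exists an [n+1,k]_q MDS linear code C over F_q whose l-Galois hull Hull_l(C) = C ∩ C^{⊥_l} has dimension exactly h. -/
open Finset

section Aux

open Polynomial Lagrange

variable {K : Type*} [Field K]



lemma coeff_interpolate {N : ℕ} (a : Fin N → K) (ha : Function.Injective a) (rv : Fin N → K) :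
    (interpolate univ a rv).coeff (N - 1) = ∑ i, rv i * nodalWeight univ a i := by
  rw [interpolate_apply, finset_sum_coeff]
  refine Finset.sum_congr rfl fun i _ => ?_
  rw [coeff_C_mul]
  congr 1
  rw [basis_eq_prod_sub_inv_mul_nodal_div (mem_univ i), ← nodal_erase_eq_nodal_div (mem_univ i),
    coeff_C_mul]
  have hmonic : (nodal ((univ : Finset (Fin N)).erase i) a).Monic := nodal_monic
  have hdeg : (nodal ((univ : Finset (Fin N)).erase i) a).natDegree = N - 1 := by
    rw [natDegree_nodal, card_erase_of_mem (mem_univ i), card_univ, Fintype.card_fin]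
  rw [← hdeg, hmonic.coeff_natDegree, mul_one]

lemma sum_nodalWeight_pow {N : ℕ} (a : Fin N → K) (ha : Function.Injective a)
    {s : ℕ} (hs : s < N) :
    ∑ i, nodalWeight univ a i * a i ^ s = if s = N - 1 then 1 else 0 := by
  have hcard : ((X : K[X]) ^ s).degree < (#(univ : Finset (Fin N)) : ℕ) := by
    rw [degree_X_pow, card_univ, Fintype.card_fin]
    exact_mod_cast hs
  have h1 : interpolate univ a (fun i => ((X : K[X]) ^ s).eval (a i)) = (X : K[X]) ^ s :=
    (eq_interpolate (ha.injOn) hcard).symm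
  have h2 := congrArg (fun f : K[X] => f.coeff (N - 1)) h1
  simp only [eval_pow, eval_X] at h2
  rw [coeff_interpolate a ha] at h2
  rw [coeff_X_pow] at h2
  rw [show (∑ i, nodalWeight univ a i * a i ^ s) = ∑ i : Fin N, a i ^ s * nodalWeight univ a i
    from Finset.sum_congr rfl fun i _ => mul_comm _ _, h2]
  by_cases hc : s = N - 1 <;> simp [hc] <;> omega

lemma sum_weight_eval {N : ℕ} (a : Fin N → K) (ha : Function.Injective a)
    (R : K[X]) (hR : R.degree < ((N - 1 : ℕ) : WithBot ℕ)) :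
    ∑ i, nodalWeight univ a i * R.eval (a i) = 0 := by
  rcases eq_or_ne R 0 with rfl | hR0
  · simp
  have hnd : R.natDegree < N - 1 := (natDegree_lt_iff_degree_lt hR0).2 hR
  have heval : ∀ x : K, R.eval x = ∑ t ∈ range (N - 1), R.coeff t * x ^ t := fun x =>
    eval_eq_sum_range' hnd x
  calc ∑ i, nodalWeight univ a i * R.eval (a i)
      = ∑ t ∈ range (N - 1), R.coeff t * ∑ i, nodalWeight univ a i * a i ^ t := by
        simp_rw [heval, Finset.mul_sum]
        rw [Finset.sum_comm]
        refine Finset.sum_congr rfl fun t _ => ?_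
        exact Finset.sum_congr rfl fun i _ => by ring
    _ = 0 := by
        refine Finset.sum_eq_zero fun t ht => ?_
        rw [Finset.mem_range] at ht
        rw [sum_nodalWeight_pow a ha (by omega), if_neg (by omega), mul_zero]




set_option maxHeartbeats 1000000 in
lemma coeff_vanish_of_orth {N k : ℕ} (hkN : k + 1 ≤ N) (a : Fin N → K)
    (ha : Function.Injective a) (G : K[X]) (hG : G.degree < (N : ℕ))
    (horth : ∀ s, s < k → ∑ i, a i ^ s * (nodalWeight univ a i * G.eval (a i)) = 0) :
    G.degree < ((N - k : ℕ) : WithBot ℕ) := by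
  rcases eq_or_ne G 0 with rfl | hG0
  · simpa using Nat.cast_lt.mpr (show 0 < N - k by omega) |>.trans_le' (by simp)
  have key : ∀ s, s < k → G.coeff (N - 1 - s) = 0 := by
    intro s
    induction s using Nat.strong_induction_on with
    | _ s IH =>
      intro hsk
      have hHnd : (G * X ^ s).natDegree < N + s := by
        rw [natDegree_mul hG0 (pow_ne_zero s X_ne_zero)]
        have := (natDegree_lt_iff_degree_lt hG0).2 hG
        simp only [natDegree_X_pow]
        omega
      have hsum : ∑ i, a i ^ s * (nodalWeight univ a i * G.eval (a i))
          = ∑ t ∈ range (N + s), (G * X ^ s).coeff t *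
              ∑ i, nodalWeight univ a i * a i ^ t := by
        have heval : ∀ x : K, (G * X ^ s).eval x
            = ∑ t ∈ range (N + s), (G * X ^ s).coeff t * x ^ t := fun x =>
          eval_eq_sum_range' hHnd x
        have h1 : ∑ i, a i ^ s * (nodalWeight univ a i * G.eval (a i))
            = ∑ i, nodalWeight univ a i * (G * X ^ s).eval (a i) := by
          refine Finset.sum_congr rfl fun i _ => ?_
          simp only [eval_mul, eval_pow, eval_X]; ring
        have h2 : ∑ i, nodalWeight univ a i * (G * X ^ s).eval (a i)
            = ∑ i, ∑ t ∈ range (N + s), (G * X ^ s).coeff t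
                * (nodalWeight univ a i * a i ^ t) := by
          refine Finset.sum_congr rfl fun i _ => ?_
          rw [heval (a i), Finset.mul_sum]
          exact Finset.sum_congr rfl fun t _ => by ring
        rw [h1, h2, Finset.sum_comm]
        exact Finset.sum_congr rfl fun t _ => by rw [Finset.mul_sum]
      have hzero := horth s hsk
      rw [hsum] at hzero
      have hsingle : ∑ t ∈ range (N + s), (G * X ^ s).coeff t *
          ∑ i, nodalWeight univ a i * a i ^ t = G.coeff (N - 1 - s) := by
        rw [Finset.sum_eq_single (N - 1)]
        · rw [sum_nodalWeight_pow a ha (by omega), if_pos rfl, mul_one,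
            coeff_mul_X_pow', if_pos (by omega)]
        · intro t _ htne
          rcases lt_or_ge t N with htN | htN
          · rw [sum_nodalWeight_pow a ha htN, if_neg (by omega), mul_zero]
          · rw [coeff_mul_X_pow', if_pos (by omega)]
            have : G.coeff (t - s) = 0 := by
              rcases lt_or_ge (t - s) N with h1 | h1
              · have hs' : N - 1 - (t - s) < s := by omega
                have := IH (N - 1 - (t - s)) hs' (by omega)
                rwa [show N - 1 - (N - 1 - (t - s)) = t - s by omega] at this
              · exact coeff_eq_zero_of_degree_lt (hG.trans_le (by exact_mod_cast Nat.cast_le.2 h1))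
            rw [this, zero_mul]
        · intro hmem
          exact absurd (Finset.mem_range.2 (by omega)) hmem
      rw [hsingle] at hzero
      exact hzero
  rw [degree_lt_iff_coeff_zero]
  intro m hm
  have hm' : N - k ≤ m := by exact_mod_cast hm
  rcases lt_or_ge m N with hmN | hmN
  · have := key (N - 1 - m) (by omega)
    rwa [show N - 1 - (N - 1 - m) = m by omega] at this
  · exact coeff_eq_zero_of_degree_lt (hG.trans_le (by exact_mod_cast Nat.cast_le.2 hmN))




lemma dual_char_mp {N k : ℕ} (hkN : k + 1 ≤ N) (a : Fin N → K) (ha : Function.Injective a)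
    (cvec : Fin N → K) (horth : ∀ s, s < k → ∑ i, a i ^ s * cvec i = 0) :
    ∃ Q : K[X], Q.degree < ((N - k : ℕ) : WithBot ℕ) ∧
      ∀ i, cvec i = nodalWeight univ a i * Q.eval (a i) := by
  set G := interpolate univ a (fun i => (nodalWeight univ a i)⁻¹ * cvec i) with hGdef
  have hwne : ∀ i : Fin N, nodalWeight univ a i ≠ 0 := fun i =>
    nodalWeight_ne_zero ha.injOn (mem_univ i)
  have hGev : ∀ i, nodalWeight univ a i * G.eval (a i) = cvec i := by
    intro i
    rw [hGdef, eval_interpolate_at_node _ ha.injOn (mem_univ i), ← mul_assoc,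
      mul_inv_cancel₀ (hwne i), one_mul]
  have hGdeg : G.degree < (N : ℕ) := by
    have := degree_interpolate_lt (s := (univ : Finset (Fin N)))
      (r := fun i => (nodalWeight univ a i)⁻¹ * cvec i) (v := a) ha.injOn
    rwa [card_univ, Fintype.card_fin] at this
  refine ⟨G, coeff_vanish_of_orth hkN a ha G hGdeg ?_, fun i => (hGev i).symm⟩
  intro s hs
  have h := horth s hs
  calc ∑ i, a i ^ s * (nodalWeight univ a i * G.eval (a i))
      = ∑ i, a i ^ s * cvec i := Finset.sum_congr rfl fun i _ => by rw [hGev i]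
    _ = 0 := h

lemma dual_char_mpr {N k : ℕ} (hkN : k + 1 ≤ N) (a : Fin N → K) (ha : Function.Injective a)
    (Q : K[X]) (hQ : Q.degree < ((N - k : ℕ) : WithBot ℕ)) {s : ℕ} (hs : s < k) :
    ∑ i, a i ^ s * (nodalWeight univ a i * Q.eval (a i)) = 0 := by
  have hstep : ∑ i, a i ^ s * (nodalWeight univ a i * Q.eval (a i))
      = ∑ i, nodalWeight univ a i * (Q * X ^ s).eval (a i) := by
    refine Finset.sum_congr rfl fun i _ => ?_
    simp only [eval_mul, eval_pow, eval_X]; ring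
  rw [hstep]
  refine sum_weight_eval a ha _ ?_
  rcases eq_or_ne Q 0 with rfl | hQ0
  · simpa using Nat.cast_lt.mpr (show 0 < N - 1 by omega) |>.trans_le' (by simp)
  have hnd : Q.natDegree < N - k := (natDegree_lt_iff_degree_lt hQ0).2 hQ
  have : (Q * X ^ s).natDegree < N - 1 := by
    rw [natDegree_mul hQ0 (pow_ne_zero s X_ne_zero), natDegree_X_pow]
    omega
  exact (natDegree_lt_iff_degree_lt (mul_ne_zero hQ0 (pow_ne_zero s X_ne_zero))).1 this

/-- evaluate a polynomial of degree < k as a `Fin k` sum of its coefficients -/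
lemma evalFin {k : ℕ} (G : K[X]) (hG : G.degree < (k : ℕ)) (x : K) :
    ∑ j : Fin k, G.coeff (j : ℕ) * x ^ (j : ℕ) = G.eval x := by
  rcases eq_or_ne G 0 with rfl | hG0
  · simp
  have hnd : G.natDegree < k := (natDegree_lt_iff_degree_lt hG0).2 hG
  rw [eval_eq_sum_range' hnd x, Finset.sum_range fun j => G.coeff j * x ^ j]

/-- the polynomial attached to a coefficient vector -/
noncomputable def polyOf {k : ℕ} (c : Fin k → K) : K[X] :=
  ∑ j : Fin k, C (c j) * X ^ (j : ℕ)

lemma polyOf_eval {k : ℕ} (c : Fin k → K) (x : K) :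
    (polyOf c).eval x = ∑ j : Fin k, c j * x ^ (j : ℕ) := by
  rw [polyOf, eval_finset_sum]
  exact Finset.sum_congr rfl fun j _ => by simp

lemma polyOf_degree {k : ℕ} (c : Fin k → K) : (polyOf c).degree < (k : ℕ) := by
  refine lt_of_le_of_lt (degree_sum_le _ _) ?_
  rw [Finset.sup_lt_iff (by exact_mod_cast WithBot.bot_lt_coe k)]
  intro j _
  refine lt_of_le_of_lt (degree_mul_le _ _) ?_
  refine lt_of_le_of_lt (add_le_add degree_C_le (le_of_eq (degree_X_pow _))) ?_
  rw [zero_add]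
  exact_mod_cast j.isLt

lemma polyOf_coeff {k : ℕ} (c : Fin k → K) (j : Fin k) : (polyOf c).coeff (j : ℕ) = c j := by
  rw [polyOf, finset_sum_coeff]
  rw [Finset.sum_eq_single j]
  · simp
  · intro t _ htj
    rw [coeff_C_mul, coeff_X_pow, if_neg (fun hc => htj (Fin.ext hc.symm)), mul_zero]
  · simp
lemma polyOf_eq_zero {k : ℕ} (c : Fin k → K) (h : polyOf c = 0) : c = 0 := by
  funext j
  have := polyOf_coeff c j
  rw [h] at this
  simpa using this.symm

open Classical in
/-- a monic polynomial of degree N vanishing on N distinct points is the nodal polynomial -/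
lemma eq_nodal_of_monic_of_roots {N : ℕ} (f : K[X]) (hf : f.Monic) (hdeg : f.natDegree = N)
    (a : Fin N → K) (ha : Function.Injective a) (hroots : ∀ i, f.eval (a i) = 0) :
    f = nodal univ a := by
  have hf0 : f ≠ 0 := hf.ne_zero
  set M0 : Multiset K := Multiset.map a Finset.univ.val with hM0
  have hnodup : M0.Nodup := (Finset.univ.nodup).map ha
  have hsub : M0 ≤ f.roots := by
    rw [Multiset.le_iff_count]
    intro x
    by_cases hx : x ∈ M0
    · have h1 : M0.count x = 1 := Multiset.count_eq_one_of_mem hnodup hx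
      rw [h1]
      rw [Multiset.one_le_count_iff_mem]
      obtain ⟨i, _, rfl⟩ := Multiset.mem_map.1 hx
      refine (mem_roots hf0).2 ?_
      simpa [IsRoot] using hroots i
    · rw [Multiset.count_eq_zero_of_notMem hx]
      exact Nat.zero_le _
  have hcardM0 : Multiset.card M0 = N := by
    rw [hM0, Multiset.card_map]
    simpa using congrArg _ rfl
  have hcardroots : Multiset.card f.roots ≤ N := hdeg ▸ f.card_roots'
  have heq : M0 = f.roots := Multiset.eq_of_le_of_card_le hsub (by omega)
  have hsplits : f.Splits := by
    rw [splits_iff_card_roots, ← heq, hcardM0, hdeg]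
  have := hsplits.eq_prod_roots_of_monic hf
  rw [this, ← heq, hM0]
  rw [nodal, Finset.prod]
  rw [Multiset.map_map]
  rfl


lemma gcd_mul_n1 (x1 x2 q1 : ℕ) (hx1 : 0 < x1) (hx2 : 0 < x2) (hq : 0 < q1)
    (hlcm : q1 ∣ Nat.lcm x1 x2) :
    Nat.gcd (x1 * (q1 / Nat.gcd x2 q1)) q1 = Nat.gcd x1 q1 := by
  have hg2 : 0 < Nat.gcd x2 q1 := Nat.gcd_pos_of_pos_left _ hx2
  set n1 := q1 / Nat.gcd x2 q1 with hn1
  have hn1d : Nat.gcd x2 q1 ∣ q1 := Nat.gcd_dvd_right _ _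
  have hn1pos : 0 < n1 := Nat.div_pos (Nat.le_of_dvd hq hn1d) hg2
  have hn1dvd : n1 ∣ q1 := Nat.div_dvd_of_dvd hn1d
  apply Nat.dvd_antisymm
  · -- gcd (x1 * n1) q1 ∣ gcd x1 q1
    have hL : Nat.gcd (x1 * n1) q1 ≠ 0 := (Nat.gcd_pos_of_pos_right _ hq).ne'
    have hR : Nat.gcd x1 q1 ≠ 0 := (Nat.gcd_pos_of_pos_right _ hq).ne'
    rw [← Nat.factorization_le_iff_dvd hL hR]
    rw [Finsupp.le_def]
    intro ρ
    have h1 : (Nat.gcd (x1 * n1) q1).factorization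
        = (x1 * n1).factorization ⊓ q1.factorization :=
      Nat.factorization_gcd (Nat.mul_ne_zero hx1.ne' hn1pos.ne') hq.ne'
    have h2 : (Nat.gcd x1 q1).factorization
        = x1.factorization ⊓ q1.factorization := Nat.factorization_gcd hx1.ne' hq.ne'
    have h3 : (x1 * n1).factorization = x1.factorization + n1.factorization :=
      Nat.factorization_mul hx1.ne' hn1pos.ne'
    have h4 : n1.factorization = q1.factorization - (Nat.gcd x2 q1).factorization := by
      rw [hn1, Nat.factorization_div hn1d]
    have h5 : (Nat.gcd x2 q1).factorization = x2.factorization ⊓ q1.factorization :=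
      Nat.factorization_gcd hx2.ne' hq.ne'
    have h6 : q1.factorization ≤ (Nat.lcm x1 x2).factorization := by
      rw [Nat.factorization_le_iff_dvd hq.ne' (Nat.lcm_ne_zero hx1.ne' hx2.ne')]
      exact hlcm
    have h7 : (Nat.lcm x1 x2).factorization = x1.factorization ⊔ x2.factorization :=
      Nat.factorization_lcm hx1.ne' hx2.ne'
    rw [h1, h3, h4, h5]
    rw [h2]
    have h6' := (Finsupp.le_def.1 h6) ρ
    rw [h7] at h6'
    simp only [Finsupp.inf_apply, Finsupp.add_apply, Finsupp.tsub_apply, Finsupp.sup_apply] at *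
    omega
  · exact Nat.dvd_gcd ((Nat.gcd_dvd_left _ _).trans (Dvd.intro n1 rfl))
      (Nat.gcd_dvd_right _ _)


lemma card_filter_val_lt (N m : ℕ) (hm : m ≤ N) :
    #(univ.filter fun i : Fin N => (i : ℕ) < m) = m := by
  refine Eq.trans (Finset.card_bij (fun i _ => (i : ℕ)) ?_ ?_ ?_) (Finset.card_range m)
  · intro i hi; simp only [mem_filter] at hi; exact Finset.mem_range.2 hi.2
  · intro i hi j hj hij; exact Fin.ext hij
  · intro t ht
    rw [Finset.mem_range] at ht
    exact ⟨⟨t, by omega⟩, by simp [ht], rfl⟩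

lemma card_filter_val_not_lt (N m : ℕ) (hm : m ≤ N) :
    #(univ.filter fun i : Fin N => ¬ (i : ℕ) < m) = N - m := by
  refine Eq.trans (Finset.card_bij (fun i _ => (i : ℕ) - m) ?_ ?_ ?_) (Finset.card_range (N - m))
  · intro i hi; simp only [mem_filter] at hi
    have h2 := i.isLt
    exact Finset.mem_range.2 (show (i : ℕ) - m < N - m by omega)
  · intro i hi j hj hij
    simp only [mem_filter] at hi hj
    have hij' : (i : ℕ) - m = (j : ℕ) - m := hij
    exact Fin.ext (by omega)
  · intro t ht
    rw [Finset.mem_range] at ht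
    refine ⟨⟨t + m, by omega⟩, ?_, show t + m - m = t by omega⟩
    simp only [mem_filter, mem_univ, true_and]
    omega

/-- the generator map of the (generalized) code -/
noncomputable def codeMap {K : Type*} [Field K] {N : ℕ} (k : ℕ) (a v : Fin N → K) :
    (Fin k → K) →ₗ[K] (Fin N → K) where
  toFun := fun c i => v i * ∑ j : Fin k, c j * a i ^ (j : ℕ)
  map_add' := by
    intro c c'
    funext i
    simp only [Pi.add_apply]
    rw [← mul_add, ← Finset.sum_add_distrib]
    congr 1
    exact Finset.sum_congr rfl fun j _ => by ring
  map_smul' := by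
    intro m c
    funext i
    simp only [Pi.smul_apply, smul_eq_mul, RingHom.id_apply]
    rw [show ∑ j : Fin k, m * c j * a i ^ (j : ℕ) = m * ∑ j : Fin k, c j * a i ^ (j : ℕ) by
      rw [Finset.mul_sum]; exact Finset.sum_congr rfl fun j _ => by ring]
    ring

lemma codeMap_apply {N : ℕ} (k : ℕ) (a v : Fin N → K) (c : Fin k → K) (i : Fin N) :
    codeMap k a v c i = v i * (polyOf c).eval (a i) := by
  rw [polyOf_eval]; rfl

theorem theoremA (p l : ℕ) [Fact p.Prime] [CharP K p] {N k h : ℕ}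
    (hk1 : 1 ≤ k) (hh : h ≤ k) (hbound : (k - 1) * p ^ l + k + 1 ≤ N)
    (a : Fin N → K) (ha : Function.Injective a)
    (v : Fin N → K) (θ : K) (hθ0 : θ ≠ 0) (hθ1 : θ ≠ 1)
    (hv : ∀ i : Fin N,
      v i ^ (p ^ l + 1) = (if (i : ℕ) < k - h then θ else 1) * nodalWeight univ a i) :
    ∃ C : Submodule K (Fin N → K), IsMDSCode C k ∧
      Module.finrank K (galoisHull p l C) = h := by
  classical
  have hpl1 : 1 ≤ p ^ l := Nat.one_le_pow _ _ (Fact.out (p := p.Prime)).pos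
  have hkN : k + 1 ≤ N := by nlinarith
  have hNcard : (#(univ : Finset (Fin N)) : WithBot ℕ) = (N : ℕ) := by
    rw [card_univ, Fintype.card_fin]
  have huw : ∀ i : Fin N, nodalWeight univ a i ≠ 0 := fun i =>
    nodalWeight_ne_zero ha.injOn (mem_univ i)
  have hw : ∀ i : Fin N, (if (i : ℕ) < k - h then θ else 1) ≠ 0 := by
    intro i; split <;> simp [hθ0]
  have hvne : ∀ i : Fin N, v i ≠ 0 := by
    intro i
    have := hv i
    intro hvi
    rw [hvi, zero_pow (by omega)] at this
    exact (mul_ne_zero (hw i) (huw i)) this.symm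
  set M := codeMap k a v with hM
  have hMinj : Function.Injective M := by
    rw [← LinearMap.ker_eq_bot, LinearMap.ker_eq_bot']
    intro c hc
    apply polyOf_eq_zero
    apply Polynomial.eq_zero_of_degree_lt_of_eval_index_eq_zero (v := a) univ ha.injOn
    · rw [hNcard]
      exact (polyOf_degree c).trans_le (by exact_mod_cast Nat.cast_le.2 (by omega))
    · intro i _
      have : M c i = 0 := by rw [hc]; rfl
      rw [codeMap_apply] at this
      exact (mul_eq_zero.1 this).resolve_left (hvne i)
  set CC := LinearMap.range M with hCC
  -- zero set description
  have hzero : ∀ c : Fin k → K, ∀ i : Fin N, (M c i = 0 ↔ (polyOf c).eval (a i) = 0) := by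
    intro c i
    rw [hM, codeMap_apply]
    constructor
    · intro hmc; exact (mul_eq_zero.1 hmc).resolve_left (hvne i)
    · intro hp0; rw [hp0, mul_zero]
  -- weight of codewords
  have hwt : ∀ x : Fin N → K, wt x = N - #(univ.filter fun i => x i = 0) := by
    intro x
    have hset : {i | x i ≠ 0} = ↑(univ.filter fun i => ¬ x i = 0) := by
      ext i; simp [Finset.mem_filter]
    rw [wt, hset, Set.ncard_coe_finset]
    have h2 : #(univ.filter fun i => x i = 0) + #(univ.filter fun i => ¬ x i = 0) = N := by
      have := Finset.card_filter_add_card_filter_not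
        (s := (univ : Finset (Fin N))) (p := fun i => x i = 0)
      rw [card_univ, Fintype.card_fin] at this
      simpa using this
    omega
  refine ⟨CC, ⟨?_, ?_, ?_⟩, ?_⟩
  · -- finrank = k
    rw [hCC, LinearMap.finrank_range_of_inj hMinj, Module.finrank_pi, Fintype.card_fin]
  · -- weight lower bound
    intro x hx hx0
    obtain ⟨c, rfl⟩ := hx
    have hc0 : polyOf c ≠ 0 := by
      intro hpc
      exact hx0 (by
        have : c = 0 := polyOf_eq_zero c hpc
        rw [this, map_zero])
    have hcard : #(univ.filter fun i => M c i = 0) ≤ k - 1 := by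
      have hle : #(univ.filter fun i => M c i = 0) ≤ (polyOf c).roots.toFinset.card := by
        apply Finset.card_le_card_of_injOn (fun i => a i)
        · intro i hi
          rw [Finset.mem_coe, mem_filter] at hi
          rw [Finset.mem_coe, Multiset.mem_toFinset, mem_roots hc0]
          exact (hzero c i).1 hi.2
        · exact fun i _ j _ hij => ha hij
      have h2 : (polyOf c).roots.toFinset.card ≤ (polyOf c).natDegree :=
        le_trans (Multiset.toFinset_card_le _) (polyOf c).card_roots'
      have h3 : (polyOf c).natDegree ≤ k - 1 := by
        have := (natDegree_lt_iff_degree_lt hc0).2 (polyOf_degree c)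
        omega
      omega
    rw [hwt]
    omega
  · -- minimum weight word
    have hk1N : k - 1 ≤ N := by omega
    set emb : Fin (k - 1) → Fin N := Fin.castLE hk1N with hemb
    set P : K[X] := ∏ j : Fin (k - 1), (X - Polynomial.C (a (emb j))) with hP
    have hPmonic : P.Monic := monic_prod_of_monic _ _ fun j _ => monic_X_sub_C _
    have hPdeg : P.natDegree = k - 1 := by
      rw [hP, natDegree_prod_of_monic _ _ fun j _ => monic_X_sub_C _]
      simp [natDegree_X_sub_C]
    have hPdegk : P.degree < (k : ℕ) := by
      rw [degree_eq_natDegree hPmonic.ne_zero, hPdeg]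
      exact Nat.cast_lt.2 (by omega)
    set c : Fin k → K := fun j => P.coeff (j : ℕ) with hc
    have hMeval : ∀ i, M c i = v i * P.eval (a i) := by
      intro i
      rw [codeMap_apply]
      congr 1
      rw [polyOf_eval]
      exact evalFin P hPdegk (a i)
    have hPzero : ∀ i : Fin N, P.eval (a i) = 0 ↔ (i : ℕ) < k - 1 := by
      intro i
      rw [hP, eval_prod]
      rw [Finset.prod_eq_zero_iff]
      constructor
      · rintro ⟨j, -, hj⟩
        simp only [eval_sub, eval_X, eval_C, sub_eq_zero] at hj
        have : emb j = i := ha hj.symm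
        rw [← this]
        exact lt_of_lt_of_le j.isLt (by omega)
      · intro hi
        refine ⟨⟨(i : ℕ), hi⟩, mem_univ _, ?_⟩
        have : emb ⟨(i : ℕ), hi⟩ = i := Fin.ext rfl
        rw [this]
        simp
    refine ⟨M c, ⟨c, rfl⟩, ?_, ?_⟩
    · -- nonzero
      intro h0
      have : M c ⟨k - 1, by omega⟩ = 0 := by rw [h0]; rfl
      rw [hMeval] at this
      have := (mul_eq_zero.1 this).resolve_left (hvne _)
      rw [hPzero] at this
      simp at this
    · rw [hwt]
      have : (univ.filter fun i => M c i = 0) = (univ.filter fun i : Fin N => (i : ℕ) < k - 1) := by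
        apply Finset.filter_congr
        intro i _
        have he : (polyOf c).eval (a i) = P.eval (a i) := by
          rw [polyOf_eval]
          exact evalFin P hPdegk (a i)
        rw [hzero c i, he, hPzero i]
      rw [this, card_filter_val_lt N (k - 1) hk1N]
      omega
  · -- hull dimension
    have hpl0 : p ^ l ≠ 0 := by positivity
    have hkhN : k - h ≤ N := by omega
    set emb2 : Fin (k - h) → Fin N := Fin.castLE hkhN with hemb2
    set ev : (Fin k → K) →ₗ[K] (Fin (k - h) → K) :=
      { toFun := fun c m => ∑ j : Fin k, c j * a (emb2 m) ^ (j : ℕ)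
        map_add' := by
          intro c c'; funext m
          simp only [Pi.add_apply]
          rw [← Finset.sum_add_distrib]
          exact Finset.sum_congr rfl fun j _ => by ring
        map_smul' := by
          intro mm c; funext m
          simp only [Pi.smul_apply, smul_eq_mul, RingHom.id_apply]
          rw [Finset.mul_sum]
          exact Finset.sum_congr rfl fun j _ => by ring } with hev
    have hev_apply : ∀ (c : Fin k → K) (m : Fin (k - h)),
        ev c m = (polyOf c).eval (a (emb2 m)) := by
      intro c m; rw [polyOf_eval]; rfl
    set w : Fin N → K := fun i => if (i : ℕ) < k - h then θ else 1 with hwdef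
    set u : Fin N → K := fun i => nodalWeight univ a i with hudef
    have hrow : ∀ j : Fin k, (fun i => v i * a i ^ (j : ℕ)) ∈ CC := by
      intro j
      refine ⟨Pi.single j 1, ?_⟩
      funext i
      rw [hM, codeMap_apply, polyOf_eval]
      congr 1
      rw [Finset.sum_eq_single j]
      · simp
      · intro b _ hbj; rw [Pi.single_eq_of_ne hbj, zero_mul]
      · intro hj; exact absurd (mem_univ j) hj
    have hG : ∀ c : Fin k → K, ((polyOf c) ^ (p ^ l)).degree < ((N - k : ℕ) : WithBot ℕ) := by
      intro c
      rcases eq_or_ne (polyOf c) 0 with h0 | h0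
      · rw [h0, zero_pow hpl0, degree_zero]
        exact lt_of_lt_of_le (WithBot.bot_lt_coe _) le_rfl
      · have hnd : (polyOf c).natDegree < k := (natDegree_lt_iff_degree_lt h0).2 (polyOf_degree c)
        have h1 : ((polyOf c) ^ (p ^ l)).natDegree < N - k := by
          rw [natDegree_pow]
          have h2 : p ^ l * (polyOf c).natDegree ≤ p ^ l * (k - 1) :=
            Nat.mul_le_mul_left _ (by omega)
          have h3 : p ^ l * (k - 1) = (k - 1) * p ^ l := Nat.mul_comm _ _
          omega
        exact (natDegree_lt_iff_degree_lt (pow_ne_zero _ h0)).1 h1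
    have hsum0 : ∀ (c : Fin k → K) (s : ℕ), s < k →
        ∑ i, a i ^ s * (u i * ((polyOf c) ^ (p ^ l)).eval (a i)) = 0 := by
      intro c s hs
      exact dual_char_mpr hkN a ha _ (hG c) hs
    have he3 : ∀ i : Fin N, v i ^ (p ^ l) * v i = w i * u i := by
      intro i
      rw [← pow_succ]
      exact hv i
    -- forward: hull membership forces vanishing on S
    have keyfwd : ∀ c : Fin k → K, ((M c : Fin N → K) ∈ galoisDual p l CC) →
        ∀ m : Fin (k - h), (polyOf c).eval (a (emb2 m)) = 0 := by
      intro c hd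
      set G : K[X] := (polyOf c) ^ (p ^ l) with hGdef
      set cvec : Fin N → K := fun i => w i * (u i * G.eval (a i)) with hcvec
      have horth : ∀ s, s < k → ∑ i, a i ^ s * cvec i = 0 := by
        intro s hs
        have h0 := hd _ (hrow ⟨s, hs⟩)
        calc ∑ i, a i ^ s * cvec i
            = ∑ i, (v i * a i ^ ((⟨s, hs⟩ : Fin k) : ℕ)) * (M c i) ^ (p ^ l) := by
              refine Finset.sum_congr rfl fun i _ => ?_
              have e1 : M c i = v i * (polyOf c).eval (a i) := codeMap_apply k a v c i
              have e2 : ((polyOf c).eval (a i)) ^ (p ^ l) = G.eval (a i) := by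
                rw [hGdef, eval_pow]
              rw [e1, mul_pow, e2]
              have := he3 i
              show a i ^ s * (w i * (u i * G.eval (a i)))
                = v i * a i ^ s * (v i ^ p ^ l * G.eval (a i))
              linear_combination (-(a i ^ s * G.eval (a i))) * this
          _ = 0 := h0
      obtain ⟨Q, hQdeg, hQE⟩ := dual_char_mp hkN a ha cvec horth
      have hne : ∀ i : Fin N, ¬ ((i : ℕ) < k - h) → (Q - G).eval (a i) = 0 := by
        intro i hi
        have h1 := hQE i
        rw [hcvec] at h1
        simp only [hwdef, if_neg hi, one_mul] at h1
        rw [eval_sub, sub_eq_zero]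
        exact (mul_left_cancel₀ (huw i) h1).symm
      have hQG : Q = G := by
        have h1 : (Q - G).degree < ((N - k : ℕ) : WithBot ℕ) :=
          lt_of_le_of_lt (degree_sub_le _ _) (max_lt hQdeg (hG c))
        have hsub : Q - G = 0 := by
          apply Polynomial.eq_zero_of_degree_lt_of_eval_index_eq_zero
            (univ.filter fun i : Fin N => ¬ (i : ℕ) < k - h) ha.injOn
          · rw [card_filter_val_not_lt N (k - h) hkhN]
            exact lt_of_lt_of_le h1 (by exact_mod_cast (show N - k ≤ N - (k - h) by omega))
          · intro i hi
            exact hne i (mem_filter.1 hi).2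
        exact sub_eq_zero.1 hsub
      intro m
      have him : ((emb2 m : Fin N) : ℕ) < k - h := by
        simpa [hemb2] using m.isLt
      have h1 := hQE (emb2 m)
      rw [hcvec, hQG] at h1
      simp only [hwdef, if_pos him] at h1
      have h2 : (θ - 1) * (u (emb2 m) * G.eval (a (emb2 m))) = 0 := by
        linear_combination h1
      have h3 : G.eval (a (emb2 m)) = 0 := by
        rcases mul_eq_zero.1 h2 with h | h
        · exact absurd h (sub_ne_zero.2 hθ1)
        · exact (mul_eq_zero.1 h).resolve_left (huw _)
      rw [hGdef, eval_pow] at h3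
      exact pow_eq_zero_iff hpl0 |>.1 h3
    -- backward: vanishing on S gives dual membership
    have keybwd : ∀ c : Fin k → K, (∀ m : Fin (k - h), (polyOf c).eval (a (emb2 m)) = 0) →
        ((M c : Fin N → K) ∈ galoisDual p l CC) := by
      intro c hz
      show ∀ y ∈ CC, ∑ i, y i * (M c) i ^ p ^ l = 0
      rintro y ⟨c', rfl⟩
      set G : K[X] := (polyOf c) ^ (p ^ l) with hGdef
      have hwG : ∀ i : Fin N, w i * G.eval (a i) = G.eval (a i) := by
        intro i
        by_cases hi : (i : ℕ) < k - h
        · have h0 : (polyOf c).eval (a i) = 0 := by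
            have : emb2 ⟨(i : ℕ), hi⟩ = i := Fin.ext rfl
            rw [← this]; exact hz ⟨(i : ℕ), hi⟩
          rw [hGdef, eval_pow, h0, zero_pow hpl0, mul_zero]
        · simp only [hwdef, if_neg hi, one_mul]
      calc ∑ i, M c' i * (M c) i ^ p ^ l
          = ∑ i, ∑ j : Fin k, c' j * (a i ^ (j : ℕ) * (u i * G.eval (a i))) := by
            refine Finset.sum_congr rfl fun i _ => ?_
            have e1 : M c' i = v i * (polyOf c').eval (a i) := codeMap_apply k a v c' i
            have e1' : M c i = v i * (polyOf c).eval (a i) := codeMap_apply k a v c i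
            have e2 : ((polyOf c).eval (a i)) ^ (p ^ l) = G.eval (a i) := by
              rw [hGdef, eval_pow]
            have hstep : M c' i * (M c) i ^ p ^ l
                = (polyOf c').eval (a i) * (u i * (w i * G.eval (a i))) := by
              rw [e1, e1', mul_pow, e2]
              linear_combination ((polyOf c').eval (a i) * G.eval (a i)) * he3 i
            rw [hstep, hwG i, polyOf_eval, Finset.sum_mul]
            exact Finset.sum_congr rfl fun j _ => by ring
        _ = ∑ j : Fin k, c' j * ∑ i, a i ^ (j : ℕ) * (u i * G.eval (a i)) := by
            rw [Finset.sum_comm]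
            exact Finset.sum_congr rfl fun j _ => by rw [Finset.mul_sum]
        _ = 0 := by
            refine Finset.sum_eq_zero fun j _ => ?_
            rw [hsum0 c (j : ℕ) j.isLt, mul_zero]
    -- hull = M (ker ev)
    have hhull : galoisHull p l CC = Submodule.map M (LinearMap.ker ev) := by
      apply le_antisymm
      · intro x hx
        rw [galoisHull, Submodule.mem_inf] at hx
        obtain ⟨⟨c, rfl⟩, hxD⟩ := hx
        refine Submodule.mem_map.2 ⟨c, ?_, rfl⟩
        rw [LinearMap.mem_ker]
        funext m
        rw [hev_apply]
        exact keyfwd c hxD m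
      · intro x hx
        obtain ⟨c, hc, rfl⟩ := Submodule.mem_map.1 hx
        rw [galoisHull, Submodule.mem_inf]
        refine ⟨⟨c, rfl⟩, keybwd c ?_⟩
        intro m
        rw [LinearMap.mem_ker] at hc
        have := congrFun hc m
        rw [hev_apply] at this
        simpa using this
    -- dimension count
    have hrange : LinearMap.range ev = ⊤ := by
      rw [LinearMap.range_eq_top]
      intro y
      have hinj2 : Set.InjOn (a ∘ emb2) (univ : Finset (Fin (k - h))) :=
        Function.Injective.injOn (ha.comp (Fin.castLE_injective hkhN))
      set G2 : K[X] := interpolate univ (a ∘ emb2) y with hG2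
      have hdeg2 : G2.degree < ((k : ℕ) : WithBot ℕ) := by
        have := degree_interpolate_lt (s := (univ : Finset (Fin (k - h)))) y hinj2
        rw [card_univ, Fintype.card_fin] at this
        exact lt_of_lt_of_le this (by exact_mod_cast (show k - h ≤ k by omega))
      refine ⟨fun j => G2.coeff (j : ℕ), ?_⟩
      funext m
      rw [hev_apply]
      have : (polyOf fun j : Fin k => G2.coeff (j : ℕ)) = G2 → True := fun _ => trivial
      rw [show ((polyOf fun j : Fin k => G2.coeff (j : ℕ)).eval (a (emb2 m)))
          = G2.eval (a (emb2 m)) by rw [polyOf_eval]; exact evalFin G2 hdeg2 _]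
      have := eval_interpolate_at_node y hinj2 (mem_univ m)
      rw [hG2]
      exact this
    have hnul := LinearMap.finrank_range_add_finrank_ker ev
    rw [hrange] at hnul
    have h1 : Module.finrank K (⊤ : Submodule K (Fin (k - h) → K)) = k - h := by
      rw [finrank_top, Module.finrank_pi, Fintype.card_fin]
    have h2 : Module.finrank K (Fin k → K) = k := by
      rw [Module.finrank_pi, Fintype.card_fin]
    have hker : Module.finrank K (LinearMap.ker ev) = h := by omega
    rw [hhull]
    have := (Submodule.equivMapOfInjective M hMinj (LinearMap.ker ev)).finrank_eq
    rw [← this, hker]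




/-- every element of the subfield `F_{p^l}` has a `(p^l+1)`-th root, in units form -/
lemma exists_root_of_cyclic {G : Type*} [Group G] (q1 pl T : ℕ) (hq1pos : 0 < q1)
    (hpl : 2 ≤ pl) (hq1eq : q1 = (pl - 1) * ((pl + 1) * T))
    (α : G) (hα : ∀ x, x ∈ Subgroup.zpowers α) (hαord : orderOf α = q1)
    (x : G) (hx : x ^ (pl - 1) = 1) : ∃ y : G, y ^ (pl + 1) = x := by
  obtain ⟨i, hi⟩ := Subgroup.mem_zpowers_iff.1 (hα x)
  set s : ℕ := (i % (q1 : ℤ)).toNat with hsdef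
  have hs : α ^ s = x := by
    have h1 : ((s : ℕ) : ℤ) = i % (q1 : ℤ) :=
      Int.toNat_of_nonneg (Int.emod_nonneg i (by exact_mod_cast hq1pos.ne'))
    have h2 : i % (q1 : ℤ) = i % ((orderOf α : ℕ) : ℤ) := by rw [hαord]
    calc α ^ s = α ^ ((s : ℕ) : ℤ) := (zpow_natCast _ _).symm
      _ = α ^ (i % ((orderOf α : ℕ) : ℤ)) := by rw [h1, h2]
      _ = α ^ i := zpow_mod_orderOf α i
      _ = x := hi
  have hdvd1 : q1 ∣ s * (pl - 1) := by
    rw [← hαord]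
    apply orderOf_dvd_of_pow_eq_one
    rw [pow_mul, hs, hx]
  obtain ⟨uu, huu⟩ := hdvd1
  have hs_eq : s = (pl + 1) * (T * uu) := by
    have h3 : (pl - 1) * s = (pl - 1) * ((pl + 1) * (T * uu)) := by
      have h2 : s * (pl - 1) = (pl - 1) * ((pl + 1) * (T * uu)) := by rw [huu, hq1eq]; ring
      rw [← h2]; ring
    exact Nat.eq_of_mul_eq_mul_left (by omega) h3
  refine ⟨α ^ (T * uu), ?_⟩
  rw [← pow_mul, show T * uu * (pl + 1) = s by rw [hs_eq]; ring, hs]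

lemma derivative_finset_prod {ι : Type*} [DecidableEq ι] (s : Finset ι) (f : ι → K[X]) :
    Polynomial.derivative (∏ i ∈ s, f i)
      = ∑ i ∈ s, (∏ j ∈ s.erase i, f j) * Polynomial.derivative (f i) := by
  induction s using Finset.induction_on with
  | empty => simp
  | @insert x s hx ih =>
    rw [Finset.prod_insert hx, derivative_mul, ih, Finset.sum_insert hx,
      Finset.erase_insert hx]
    have h2 : ∀ i ∈ s, (∏ j ∈ (insert x s).erase i, f j) * Polynomial.derivative (f i)
        = f x * ((∏ j ∈ s.erase i, f j) * Polynomial.derivative (f i)) := by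
      intro i hi
      rw [Finset.erase_insert_of_ne (by rintro rfl; exact hx hi),
        Finset.prod_insert (fun hc => hx (Finset.mem_of_mem_erase hc))]
      ring
    rw [Finset.sum_congr rfl h2, ← Finset.mul_sum]
    ring

set_option maxHeartbeats 1600000 in
theorem theoremB {K : Type*} [Field K] [Finite K] (p e l x1 x2 r n : ℕ) [Fact p.Prime]
    [CharP K p] (hcard : Nat.card K = p ^ e) (hp3 : 3 ≤ p) (hl : 1 ≤ l) (h2l : 2 * l ∣ e)
    (he : 0 < e) (hx1 : 0 < x1) (hx2 : 0 < x2)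
    (hlcm : (p ^ e - 1) ∣ Nat.lcm x1 x2)
    (hdvd : (p ^ e - 1) / (p ^ l - 1) ∣ x1)
    (hr1 : 1 ≤ r) (hr2 : r ≤ (p ^ e - 1) / Nat.gcd x1 (p ^ e - 1))
    (hn : n = r * ((p ^ e - 1) / Nat.gcd x2 (p ^ e - 1))) :
    ∃ a : Fin (n + 1) → K, Function.Injective a ∧
      (∃ y : Fin (n + 1) → K, ∀ i, y i ^ (p ^ l + 1) = Lagrange.nodalWeight Finset.univ a i) ∧
      ∃ θ τ : K, θ = τ ^ (p ^ l + 1) ∧ θ ≠ 0 ∧ θ ≠ 1 := by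
  classical
  set q1 := p ^ e - 1 with hq1def
  -- numeric facts
  have h2le : 2 * l ≤ e := Nat.le_of_dvd he h2l
  have hple : l ≤ e := by omega
  have hpl3 : 3 ≤ p ^ l := le_trans hp3 (Nat.le_self_pow (by omega) p)
  have hpe : p ^ (2 * l) ≤ p ^ e := Nat.pow_le_pow_right (show 1 ≤ p by omega) h2le
  have hp2l : 9 ≤ p ^ (2 * l) := by
    rw [mul_comm, pow_mul]
    calc (9 : ℕ) = 3 ^ 2 := by norm_num
    _ ≤ (p ^ l) ^ 2 := Nat.pow_le_pow_left hpl3 2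
  have hq1pos : 0 < q1 := by
    have : 2 ≤ p ^ e := le_trans (by omega) hpe
    omega
  have hfact : (p ^ l - 1) * (p ^ l + 1) = p ^ (2 * l) - 1 := by
    have h1 : p ^ (2 * l) = p ^ l * p ^ l := by rw [two_mul, pow_add]
    have h2 : (p ^ l - 1) * (p ^ l + 1) + 1 = p ^ l * p ^ l := by
      obtain ⟨B, hB⟩ : ∃ B, p ^ l = B + 1 := ⟨p ^ l - 1, by omega⟩
      rw [hB, Nat.add_sub_cancel]
      ring
    omega
  have hld : l ∣ e := dvd_trans (dvd_mul_left l 2) h2l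
  have hd1 : p ^ l - 1 ∣ q1 := by
    obtain ⟨t, ht⟩ := hld
    have h := Nat.sub_dvd_pow_sub_pow (p ^ l) 1 t
    rw [one_pow, ← pow_mul, ← ht] at h
    rwa [hq1def]
  have hd2 : p ^ (2 * l) - 1 ∣ q1 := by
    obtain ⟨m, hm⟩ := h2l
    have h := Nat.sub_dvd_pow_sub_pow (p ^ (2 * l)) 1 m
    rw [one_pow, ← pow_mul, ← hm] at h
    rwa [hq1def]
  set T := q1 / (p ^ (2 * l) - 1) with hTdef
  have hT : (p ^ (2 * l) - 1) * T = q1 := Nat.mul_div_cancel' hd2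
  have hq1eq : q1 = (p ^ l - 1) * ((p ^ l + 1) * T) := by rw [← hT, ← hfact]; ring
  -- units group
  obtain ⟨α, hα⟩ := IsCyclic.exists_generator (α := Kˣ)
  have hαord : orderOf α = q1 := by
    rw [orderOf_eq_card_of_forall_mem_zpowers hα, Nat.card_units, hcard]
  have hα1 : α ^ q1 = 1 := by rw [← hαord]; exact pow_orderOf_eq_one α
  -- root extraction in K
  have hrootK : ∀ z : K, z ≠ 0 → z ^ p ^ l = z → ∃ y : K, y ^ (p ^ l + 1) = z := by
    intro z hz hfix
    set zu := Units.mk0 z hz with hzu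
    have h1 : zu ^ (p ^ l - 1) = 1 := by
      have h2 : z ^ (p ^ l - 1) * z = z := by
        rw [← pow_succ, Nat.sub_add_cancel (by omega)]
        exact hfix
      have h3 : z ^ (p ^ l - 1) = 1 :=
        mul_right_cancel₀ hz (h2.trans (one_mul z).symm)
      exact Units.ext (by rw [Units.val_pow_eq_pow_val]; exact h3)
    obtain ⟨y, hy⟩ := exists_root_of_cyclic q1 (p ^ l) T hq1pos (by omega) hq1eq α hα hαord zu h1
    exact ⟨(y : K), by rw [← Units.val_pow_eq_pow_val, hy]; rfl⟩
  -- θ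
  have hq1big : p ^ l + 1 < q1 := by
    have h1 : p ^ (2 * l) - 1 ≤ q1 := Nat.le_of_dvd hq1pos hd2
    have h2 : 2 * (p ^ l + 1) ≤ (p ^ l - 1) * (p ^ l + 1) :=
      Nat.mul_le_mul_right _ (by omega)
    omega
  have hθu : α ^ (p ^ l + 1) ≠ 1 := by
    intro hcon
    have h5 := orderOf_dvd_of_pow_eq_one hcon
    rw [hαord] at h5
    have := Nat.le_of_dvd (by omega) h5
    omega
  -- subgroup data
  set g2 := Nat.gcd x2 q1 with hg2def
  have hg2pos : 0 < g2 := Nat.gcd_pos_of_pos_left _ hx2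
  set n1 := q1 / g2 with hn1def
  have hg2d : g2 ∣ q1 := Nat.gcd_dvd_right _ _
  have hn1pos : 0 < n1 := Nat.div_pos (Nat.le_of_dvd hq1pos hg2d) hg2pos
  have hn1dvd : n1 ∣ q1 := Nat.div_dvd_of_dvd hg2d
  have hnval : n = r * n1 := hn
  have hpn1 : ¬ (p ∣ n1) := by
    intro hcon
    have h1 : p ∣ q1 := hcon.trans hn1dvd
    have h2 : p ∣ p ^ e := dvd_pow_self p he.ne'
    have h3 : p ^ e - q1 = 1 := by omega
    have h4 := Nat.dvd_sub h2 h1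
    rw [h3] at h4
    exact absurd (Nat.le_of_dvd one_pos h4) (by omega)
  -- γ and its subfield property
  set γ : Kˣ := α ^ x1 with hγdef
  have hγ1 : γ ^ (p ^ l - 1) = 1 := by
    obtain ⟨s', hs'⟩ := hdvd
    rw [hγdef, ← pow_mul]
    have hdm : q1 / (p ^ l - 1) * (p ^ l - 1) = q1 := Nat.div_mul_cancel hd1
    have hx1e : x1 * (p ^ l - 1) = q1 * s' := by
      calc x1 * (p ^ l - 1) = (q1 / (p ^ l - 1) * (p ^ l - 1)) * s' := by rw [hs']; ring
        _ = q1 * s' := by rw [hdm]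
    rw [hx1e, pow_mul, hα1, one_pow]
  have hγK : (γ : K) ^ p ^ l = (γ : K) := by
    have h1 : (γ : K) ^ (p ^ l - 1) = 1 := by
      rw [← Units.val_pow_eq_pow_val, hγ1, Units.val_one]
    calc (γ : K) ^ p ^ l = (γ : K) ^ (p ^ l - 1) * (γ : K) := by
          rw [← pow_succ, Nat.sub_add_cancel (by omega)]
      _ = (γ : K) := by rw [h1, one_mul]
  -- δ
  set δ : Kˣ := γ ^ n1 with hδdef
  have hδord : r ≤ orderOf δ := by
    have h1 : δ = α ^ (x1 * n1) := by rw [hδdef, hγdef, ← pow_mul]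
    rw [h1, orderOf_pow, hαord, Nat.gcd_comm q1 (x1 * n1),
      gcd_mul_n1 x1 x2 q1 hx1 hx2 hq1pos hlcm]
    exact hr2
  -- ζ
  set ζ : Kˣ := α ^ (q1 / n1) with hζdef
  have hq1n1 : q1 / n1 ∣ q1 := Nat.div_dvd_of_dvd hn1dvd
  have hζord : orderOf ζ = n1 := by
    rw [hζdef, orderOf_pow, hαord, Nat.gcd_comm, Nat.gcd_eq_left hq1n1,
      Nat.div_div_self hn1dvd hq1pos.ne']
  have hζ1 : ζ ^ n1 = 1 := by
    rw [hζdef, ← pow_mul, Nat.div_mul_cancel hn1dvd, hα1]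
  -- au and injectivity
  set au : ℕ → Kˣ := fun t => γ ^ (t / n1) * ζ ^ (t % n1) with haudef
  have hau_pow : ∀ t, (au t) ^ n1 = δ ^ (t / n1) := by
    intro t
    rw [haudef]
    simp only
    rw [mul_pow]
    have e1 : (γ ^ (t / n1)) ^ n1 = δ ^ (t / n1) := by
      rw [← pow_mul, mul_comm, pow_mul, ← hδdef]
    have e2 : (ζ ^ (t % n1)) ^ n1 = 1 := by
      rw [← pow_mul, mul_comm, pow_mul, hζ1, one_pow]
    rw [e1, e2, mul_one]
  have hkey : ∀ t, t < r * n1 → ∀ t', t' < r * n1 → au t = au t' → t = t' := by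
    intro t ht t' ht' heq
    have h1 : δ ^ (t / n1) = δ ^ (t' / n1) := by
      rw [← hau_pow, ← hau_pow, heq]
    have hdl : t / n1 < orderOf δ :=
      lt_of_lt_of_le ((Nat.div_lt_iff_lt_mul hn1pos).2 ht) hδord
    have hdl' : t' / n1 < orderOf δ :=
      lt_of_lt_of_le ((Nat.div_lt_iff_lt_mul hn1pos).2 ht') hδord
    have hdiv : t / n1 = t' / n1 := pow_injOn_Iio_orderOf hdl hdl' h1
    have h2 : ζ ^ (t % n1) = ζ ^ (t' % n1) := by
      have h3 := heq
      rw [haudef] at h3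
      simp only at h3
      rw [hdiv] at h3
      exact mul_left_cancel h3
    have hml : t % n1 < orderOf ζ := by rw [hζord]; exact Nat.mod_lt _ hn1pos
    have hml' : t' % n1 < orderOf ζ := by rw [hζord]; exact Nat.mod_lt _ hn1pos
    have hmod : t % n1 = t' % n1 := pow_injOn_Iio_orderOf hml hml' h2
    have hdm1 := Nat.div_add_mod t n1
    have hdm2 := Nat.div_add_mod t' n1
    have : n1 * (t / n1) = n1 * (t' / n1) := by rw [hdiv]
    omega
  -- the points
  set a : Fin (n + 1) → K :=
    fun i => if (i : ℕ) = 0 then 0 else ((au ((i : ℕ) - 1) : Kˣ) : K) with hadef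
  have hainj : Function.Injective a := by
    intro i j hij
    rw [hadef] at hij
    simp only at hij
    by_cases hi : (i : ℕ) = 0 <;> by_cases hj : (j : ℕ) = 0
    · exact Fin.ext (by omega)
    · rw [if_pos hi, if_neg hj] at hij; exact absurd hij.symm (Units.ne_zero _)
    · rw [if_neg hi, if_pos hj] at hij; exact absurd hij (Units.ne_zero _)
    · rw [if_neg hi, if_neg hj] at hij
      have h1 : au ((i : ℕ) - 1) = au ((j : ℕ) - 1) := Units.ext hij
      have hi2 : (i : ℕ) - 1 < r * n1 := by have := i.isLt; omega
      have hj2 : (j : ℕ) - 1 < r * n1 := by have := j.isLt; omega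
      have := hkey _ hi2 _ hj2 h1
      exact Fin.ext (by omega)
  -- root powers
  set cc : ℕ → K := fun j => ((δ : Kˣ) : K) ^ j with hccdef
  have han1 : ∀ i : Fin (n + 1), (i : ℕ) ≠ 0 → (a i) ^ n1 = cc (((i : ℕ) - 1) / n1) := by
    intro i hi
    rw [hadef]
    simp only [if_neg hi]
    rw [← Units.val_pow_eq_pow_val, hau_pow, hccdef]
    simp only
    rw [Units.val_pow_eq_pow_val]
  -- E and nodal
  set P : K[X] := ∏ j ∈ Finset.range r, (X ^ n1 - C (cc j)) with hPdef
  set E : K[X] := X * P with hEdef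
  have hPmonic : P.Monic := monic_prod_of_monic _ _ fun j _ => monic_X_pow_sub_C _ hn1pos.ne'
  have hEmonic : E.Monic := monic_X.mul hPmonic
  have hEdeg : E.natDegree = n + 1 := by
    rw [hEdef, (monic_X (R := K)).natDegree_mul hPmonic, natDegree_X, hPdef,
      natDegree_prod_of_monic _ _ fun j _ => monic_X_pow_sub_C _ hn1pos.ne']
    simp only [natDegree_X_pow_sub_C, Finset.sum_const, Finset.card_range, smul_eq_mul]
    omega
  have hj0mem : ∀ i : Fin (n + 1), (i : ℕ) ≠ 0 → ((i : ℕ) - 1) / n1 ∈ Finset.range r := by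
    intro i hi
    rw [Finset.mem_range]
    have := i.isLt
    exact (Nat.div_lt_iff_lt_mul hn1pos).2 (by omega)
  have hEroot : ∀ i : Fin (n + 1), E.eval (a i) = 0 := by
    intro i
    by_cases hi : (i : ℕ) = 0
    · have h0 : a i = 0 := by rw [hadef]; simp [hi]
      rw [h0, hEdef, eval_mul, eval_X, zero_mul]
    · rw [hEdef, eval_mul, hPdef, eval_prod]
      rw [Finset.prod_eq_zero (hj0mem i hi) (by
        simp only [eval_sub, eval_pow, eval_X, eval_C]
        rw [han1 i hi, sub_self]), mul_zero]
  have hEnodal : E = nodal univ a := eq_nodal_of_monic_of_roots E hEmonic hEdeg a hainj hEroot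
  -- Frobenius-fixedness of derivative values
  haveI : ExpChar K p := ExpChar.prime Fact.out
  set φ := iterateFrobenius K p l with hφdef
  have hφ : ∀ z : K, φ z = z ^ p ^ l := fun z => iterateFrobenius_def p l z
  have hδK : ((δ : Kˣ) : K) ^ p ^ l = ((δ : Kˣ) : K) := by
    have h1 : ((δ : Kˣ) : K) = (γ : K) ^ n1 := by rw [hδdef, Units.val_pow_eq_pow_val]
    rw [h1, ← pow_mul, mul_comm, pow_mul, hγK]
  have hccfix : ∀ j, φ (cc j) = cc j := by
    intro j
    rw [hφ, hccdef]
    simp only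
    rw [← pow_mul, mul_comm, pow_mul, hδK]
  have hdE : Polynomial.derivative E = P + X * Polynomial.derivative P := by
    rw [hEdef, derivative_mul, derivative_X, one_mul]
  have hdP : Polynomial.derivative P = ∑ j ∈ Finset.range r,
      (∏ j' ∈ (Finset.range r).erase j, (X ^ n1 - C (cc j'))) * (C (n1 : K) * X ^ (n1 - 1)) := by
    rw [hPdef, derivative_finset_prod]
    refine Finset.sum_congr rfl fun j _ => ?_
    congr 1
    rw [derivative_sub, derivative_C, sub_zero, derivative_X_pow]
  have hval0 : ∀ i : Fin (n + 1), (i : ℕ) = 0 →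
      eval (a i) (Polynomial.derivative E) = ∏ j ∈ Finset.range r, (0 - cc j) := by
    intro i hi
    have h0 : a i = 0 := by rw [hadef]; simp [hi]
    rw [hdE, h0, eval_add, eval_mul, eval_X, zero_mul, add_zero, hPdef, eval_prod]
    refine Finset.prod_congr rfl fun j _ => ?_
    simp [zero_pow hn1pos.ne']
  have hvalpos : ∀ i : Fin (n + 1), (i : ℕ) ≠ 0 →
      eval (a i) (Polynomial.derivative E) = (n1 : K) * cc (((i : ℕ) - 1) / n1) *
        ∏ j' ∈ (Finset.range r).erase (((i : ℕ) - 1) / n1),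
          (cc (((i : ℕ) - 1) / n1) - cc j') := by
    intro i hi
    set j0 := ((i : ℕ) - 1) / n1 with hj0def
    have hj0 : j0 ∈ Finset.range r := hj0mem i hi
    have hxn1 : (a i) ^ n1 = cc j0 := han1 i hi
    have hP0 : eval (a i) P = 0 := by
      rw [hPdef, eval_prod]
      exact Finset.prod_eq_zero hj0 (by
        simp only [eval_sub, eval_pow, eval_X, eval_C]
        rw [hxn1, sub_self])
    have hdPval : eval (a i) (Polynomial.derivative P)
        = (∏ j' ∈ (Finset.range r).erase j0, (cc j0 - cc j')) * ((n1 : K) * (a i) ^ (n1 - 1)) := by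
      rw [hdP, eval_finset_sum]
      rw [Finset.sum_eq_single j0]
      · simp only [eval_mul, eval_prod, eval_sub, eval_pow, eval_X, eval_C, hxn1]
      · intro j hj hjne
        simp only [eval_mul, eval_prod, eval_sub, eval_pow, eval_X, eval_C]
        rw [Finset.prod_eq_zero (Finset.mem_erase.2 ⟨Ne.symm hjne, hj0⟩)
          (by rw [hxn1, sub_self]), zero_mul]
      · intro hno; exact absurd hj0 hno
    rw [hdE, eval_add, hP0, zero_add, eval_mul, eval_X, hdPval]
    have hxx : a i ^ (n1 - 1) * a i = cc j0 := by
      rw [← pow_succ, Nat.sub_add_cancel hn1pos, hxn1]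
    linear_combination ((n1 : K) * ∏ j' ∈ (Finset.range r).erase j0, (cc j0 - cc j')) * hxx
  have hderiv : ∀ i : Fin (n + 1),
      φ (eval (a i) (Polynomial.derivative E)) = eval (a i) (Polynomial.derivative E) := by
    intro i
    by_cases hi : (i : ℕ) = 0
    · rw [hval0 i hi, map_prod]
      refine Finset.prod_congr rfl fun j _ => ?_
      rw [map_sub, map_zero, hccfix]
    · rw [hvalpos i hi, map_mul, map_mul, map_natCast, hccfix, map_prod]
      congr 1
      refine Finset.prod_congr rfl fun j' _ => ?_
      rw [map_sub, hccfix, hccfix]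
  have hwval : ∀ i, nodalWeight univ a i = (eval (a i) (Polynomial.derivative E))⁻¹ := by
    intro i
    rw [nodalWeight_eq_eval_derivative_nodal (Finset.mem_univ i), hEnodal]
  have hwfix : ∀ i : Fin (n + 1), (nodalWeight univ a i) ^ p ^ l = nodalWeight univ a i := by
    intro i
    rw [hwval, inv_pow]
    congr 1
    rw [← hφ]
    exact hderiv i
  have hwne : ∀ i, nodalWeight univ a i ≠ 0 := fun i =>
    nodalWeight_ne_zero hainj.injOn (Finset.mem_univ i)
  refine ⟨a, hainj,
    ⟨fun i => Classical.choose (hrootK _ (hwne i) (hwfix i)),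
      fun i => Classical.choose_spec (hrootK _ (hwne i) (hwfix i))⟩,
    ((α ^ (p ^ l + 1) : Kˣ) : K), ((α : Kˣ) : K), ?_, ?_, ?_⟩
  · exact (Units.val_pow_eq_pow_val _ _).symm
  · exact Units.ne_zero _
  · intro hcon
    exact hθu (Units.ext (by rw [hcon, Units.val_one]))


end Aux

open Polynomial Lagrange in
/-- Theorem 3(2): let `q = p^e` with `p` an odd prime and `2l ∣ e`.
Assume `(q-1) ∣ lcm(x₁, x₂)` and `(q-1)/(p^l-1) ∣ x₁`, and let
`n = r(q-1)/gcd(x₂, q-1)` with `1 ≤ r ≤ (q-1)/gcd(x₁, q-1)`.  Then for every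
`1 ≤ k ≤ ⌊(p^l + n)/(p^l + 1)⌋` and every admissible `h` there is an
`[n + 1, k]_q` MDS code whose `l`-Galois hull has dimension exactly `h`. -/
theorem exists_mds_code_galoisHull_dim_thm3_2
    (p e l x1 x2 r n k h : ℕ) [Fact p.Prime] (hodd : Odd p) (he : 0 < e)
    (h2l : 2 * l ∣ e) (hx1 : 0 < x1) (hx2 : 0 < x2)
    (hlcm : (p ^ e - 1) ∣ Nat.lcm x1 x2)
    (hdvd : (p ^ e - 1) / (p ^ l - 1) ∣ x1)
    (hr1 : 1 ≤ r) (hr2 : r ≤ (p ^ e - 1) / Nat.gcd x1 (p ^ e - 1))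
    (hn : n = r * ((p ^ e - 1) / Nat.gcd x2 (p ^ e - 1)))
    (hk1 : 1 ≤ k) (hk2 : k ≤ (p ^ l + n) / (p ^ l + 1)) (hh : h ≤ k) :
    ∃ C : Submodule (GaloisField p e) (Fin (n + 1) → GaloisField p e),
      IsMDSCode C k ∧
      Module.finrank (GaloisField p e) (galoisHull p l C) = h := by
  classical
  have hp2 : 2 ≤ p := (Fact.out (p := p.Prime)).two_le
  have hp3 : 3 ≤ p := by
    obtain ⟨m, hm⟩ := hodd
    omega
  have hl : 1 ≤ l := by
    rcases Nat.eq_zero_or_pos l with rfl | hl0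
    · rw [mul_zero] at h2l
      exact absurd (Nat.eq_zero_of_zero_dvd h2l) (by omega)
    · exact hl0
  have hcard : Nat.card (GaloisField p e) = p ^ e := GaloisField.card p e he.ne'
  obtain ⟨a, hainj, ⟨y, hy⟩, θ, τ, hθτ, hθ0, hθ1⟩ :=
    theoremB p e l x1 x2 r n hcard hp3 hl h2l he hx1 hx2 hlcm hdvd hr1 hr2 hn
  have hbound : (k - 1) * p ^ l + k + 1 ≤ n + 1 := by
    have hA : 0 < p ^ l + 1 := by positivity
    have h1 : k * (p ^ l + 1) ≤ p ^ l + n := (Nat.le_div_iff_mul_le hA).1 hk2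
    have h2 : k * (p ^ l + 1) = k * p ^ l + k := by ring
    have h3 : (k - 1) * p ^ l + 1 * p ^ l = k * p ^ l := by
      rw [← Nat.add_mul]
      congr 1
      omega
    omega
  set v : Fin (n + 1) → GaloisField p e :=
    fun i => if (i : ℕ) < k - h then τ * y i else y i with hvdef
  have hv : ∀ i : Fin (n + 1), v i ^ (p ^ l + 1)
      = (if (i : ℕ) < k - h then θ else 1) * Lagrange.nodalWeight Finset.univ a i := by
    intro i
    rw [hvdef]
    by_cases hi : (i : ℕ) < k - h
    · simp only [if_pos hi]
      rw [mul_pow, hy i, hθτ]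
    · simp only [if_neg hi]
      rw [hy i, one_mul]
  exact theoremA p l hk1 hh hbound a hainj v θ hθ0 hθ1 hv
end

section
/- Let q = p^e be a prime power with l | e, set y = (q−1)/(p^l − 1), and let m | (q−1) with m = m_1 m_2 where m_1 = m/gcd(m,y) and m_2 = gcd(m,y). Let α be a primitive element of F_q, let ϑ_1 = α^{(q−1)/m} and ϑ_2 = α^{y/m_2}, let H = ⟨ϑ_1⟩ (of order m) and G = ⟨ϑ_2⟩ (of order (p^l−1)m_2), so H is a subgroup of G; let η_1,…,η_{(p^l−1)/m_1} be coset representatives of G/H. Let n = rm with 1 ≤ r ≤ (p^l−1)/m_1 and let {a_1,…,a_n} = ∪_{i=1}^{r} η_i H (these are distinct). If a_i ∈ η_s H, so a_i = η_s ϑ_1^t for some 1 ≤ t ≤ m, then u_i := Π_{1≤j≤n, j≠i} (a_i − a_j)^{−1} satisfies u_i = a_i · η_s^{−m} · m^{−1} · Π_{1≤s'≤r, s'≠s} (η_s^m − η_{s'}^m)^{−1}, and moreover a_i^{−1} u_i ∈ F_{p^l}^*. -/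
open Finset
open scoped Classical

section Aux
open Polynomial

/-- Evaluation of `X^m - c^m = ∏ (X - ζ^i c)` at a point. -/
lemma aux_prod_eval {K : Type*} [Field K] {m : ℕ} {ζ : K} (hζ : IsPrimitiveRoot ζ m)
    (hm : 0 < m) (c x : K) :
    ∏ i ∈ Finset.range m, (x - ζ ^ i * c) = x ^ m - c ^ m := by
  have h := X_pow_sub_C_eq_prod hζ hm (rfl : c ^ m = c ^ m)
  have := congrArg (Polynomial.eval x) h
  simpa [Polynomial.eval_prod] using this.symm

lemma aux_derivative_prod {R : Type*} [CommSemiring R] {ι : Type*} [DecidableEq ι]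
    (s : Finset ι) (f : ι → Polynomial R) :
    Polynomial.derivative (∏ i ∈ s, f i) =
      ∑ i ∈ s, (∏ j ∈ s.erase i, f j) * Polynomial.derivative (f i) := by
  classical
  induction s using Finset.induction_on with
  | empty => simp
  | @insert a s ha ih =>
    rw [Finset.prod_insert ha, Polynomial.derivative_mul, ih, Finset.sum_insert ha,
      Finset.erase_insert ha]
    rw [Finset.mul_sum]
    congr 1
    · ring
    · refine Finset.sum_congr rfl fun i hi => ?_
      rw [Finset.erase_insert_of_ne (by rintro rfl; exact ha hi),
        Finset.prod_insert (fun h => ha (Finset.erase_subset _ _ h))]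
      ring

/-- Derivative trick: the product over all other roots. -/
lemma aux_deriv {K : Type*} [Field K] {m : ℕ} {ζ : K} (hζ : IsPrimitiveRoot ζ m)
    (hm : 0 < m) (c : K) {t : ℕ} (ht : t < m) :
    ∏ j ∈ (Finset.range m).erase t, (ζ ^ t * c - ζ ^ j * c) =
      (m : K) * (ζ ^ t * c) ^ (m - 1) := by
  have h := X_pow_sub_C_eq_prod hζ hm (rfl : c ^ m = c ^ m)
  have hd := congrArg Polynomial.derivative h
  rw [aux_derivative_prod] at hd
  have hds : ∀ i : ℕ, Polynomial.derivative (X - C (ζ ^ i * c)) = 1 := by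
    intro i
    rw [Polynomial.derivative_sub, Polynomial.derivative_X, Polynomial.derivative_C, sub_zero]
  simp only [hds, mul_one] at hd
  have he := congrArg (Polynomial.eval (ζ ^ t * c)) hd
  rw [Polynomial.eval_finset_sum] at he
  rw [Finset.sum_eq_single t] at he
  · rw [Polynomial.eval_prod] at he
    simp only [Polynomial.eval_sub, Polynomial.eval_pow, Polynomial.eval_X,
      Polynomial.eval_C, Polynomial.derivative_sub, Polynomial.derivative_X_pow,
      Polynomial.derivative_C, sub_zero, Polynomial.eval_mul,
      Polynomial.eval_natCast] at he
    rw [← he]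
  · intro b hb hbt
    rw [Polynomial.eval_prod]
    apply Finset.prod_eq_zero (i := t)
    · exact Finset.mem_erase.2 ⟨fun h' => hbt h'.symm, Finset.mem_range.2 ht⟩
    · simp
  · intro h'; exact absurd (Finset.mem_range.2 ht) h'

/-- Reindexing a periodic product from `Icc 1 m` to `range m`. -/
lemma aux_reindex {M : Type*} [CommMonoid M] {m : ℕ} (hm : 0 < m) (g : ℕ → M)
    (hper : ∀ t, g t = g (t % m)) :
    ∏ t ∈ Finset.Icc 1 m, g t = ∏ i ∈ Finset.range m, g i := by
  have h1 : Finset.Icc 1 m = insert m (Finset.Ico 1 m) := by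
    ext x; simp only [Finset.mem_insert, Finset.mem_erase, Finset.mem_Icc, Finset.mem_Ico, Finset.mem_range, Nat.mod_self]; omega
  have h2 : Finset.range m = insert 0 (Finset.Ico 1 m) := by
    ext x; simp only [Finset.mem_insert, Finset.mem_erase, Finset.mem_Icc, Finset.mem_Ico, Finset.mem_range, Nat.mod_self]; omega
  rw [h1, h2, Finset.prod_insert (by simp), Finset.prod_insert (by simp [Finset.mem_Ico])]
  congr 1
  rw [hper m, hper 0, Nat.mod_self, Nat.zero_mod]

/-- Reindexing a periodic product with one element erased. -/
lemma aux_reindex_erase {M : Type*} [CommMonoid M] {m : ℕ} (hm : 0 < m) (g : ℕ → M)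
    (hper : ∀ t, g t = g (t % m)) {t : ℕ} (ht : t ∈ Finset.Icc 1 m) :
    ∏ t' ∈ (Finset.Icc 1 m).erase t, g t' =
      ∏ i ∈ (Finset.range m).erase (t % m), g i := by
  rw [Finset.mem_Icc] at ht
  rcases eq_or_lt_of_le ht.2 with rfl | htlt
  · have h1 : (Finset.Icc 1 t).erase t = Finset.Ico 1 t := by
      ext x; simp only [Finset.mem_insert, Finset.mem_erase, Finset.mem_Icc, Finset.mem_Ico, Finset.mem_range, Nat.mod_self]; omega
    have h2 : (Finset.range t).erase (t % t) = Finset.Ico 1 t := by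
      ext x; simp only [Finset.mem_insert, Finset.mem_erase, Finset.mem_Icc, Finset.mem_Ico, Finset.mem_range, Nat.mod_self]; omega
    rw [h1, h2]
  · have htm : t % m = t := Nat.mod_eq_of_lt htlt
    have h1 : (Finset.Icc 1 m).erase t = insert m ((Finset.Ico 1 m).erase t) := by
      ext x; simp only [Finset.mem_insert, Finset.mem_erase, Finset.mem_Icc, Finset.mem_Ico, Finset.mem_range, Nat.mod_self]; omega
    have h2 : (Finset.range m).erase (t % m) = insert 0 ((Finset.Ico 1 m).erase t) := by
      ext x; simp only [Finset.mem_insert, Finset.mem_erase, Finset.mem_Icc, Finset.mem_Ico, Finset.mem_range, Nat.mod_self]; omega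
    rw [h1, h2, Finset.prod_insert (by simp), Finset.prod_insert (by simp [Finset.mem_Ico])]
    congr 1
    rw [hper m, hper 0, Nat.mod_self, Nat.zero_mod]

end Aux

open Finset
open scoped Classical


/-- Lemma 8: let `q = p^e` with `l ∣ e`, set `y = (q-1)/(p^l-1)`, let
`m ∣ q-1` with `m = m₁ m₂`, `m₂ = gcd(m, y)`, `m₁ = m/m₂`.  Let `α` be a primitive element
of `F_q`, `ϑ₁ = α^{(q-1)/m}` generating `H = ⟨ϑ₁⟩` of order `m`, and `ϑ₂ = α^{y/m₂}`
generating `G = ⟨ϑ₂⟩ ⊇ H`.  Let `η₁, η₂, …` be representatives of distinct cosets of `H`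
in `G`, and let `𝒜 = ⋃_{s=1}^{r} η_s H` with `1 ≤ r ≤ (p^l-1)/m₁`, a set of `n = r m`
distinct elements.  Then for each `a = η_s ϑ₁^t ∈ 𝒜` the quantity
`u = ∏_{b ∈ 𝒜, b ≠ a} (a - b)⁻¹` equals
`a η_s^{-m} m⁻¹ ∏_{s' ≠ s} (η_s^m - η_{s'}^m)⁻¹`, and `a⁻¹ u ∈ F_{p^l}^*`
(i.e. `a⁻¹ u` is nonzero and fixed by the `p^l`-power Frobenius). -/
theorem prod_inv_sub_eq_of_coset_reps (p e l m r : ℕ) [Fact p.Prime] (he : 0 < e)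
    (hle : l ∣ e) (hm : m ∣ p ^ e - 1)
    (α : GaloisField p e) (hα : orderOf α = p ^ e - 1)
    (ϑ1 ϑ2 : GaloisField p e)
    (hϑ1 : ϑ1 = α ^ ((p ^ e - 1) / m))
    (hϑ2 : ϑ2 = α ^ (((p ^ e - 1) / (p ^ l - 1)) /
      Nat.gcd m ((p ^ e - 1) / (p ^ l - 1))))
    (hr1 : 1 ≤ r)
    (hr2 : r ≤ (p ^ l - 1) / (m / Nat.gcd m ((p ^ e - 1) / (p ^ l - 1))))
    (η : ℕ → GaloisField p e)
    (hη : ∀ i ∈ Finset.Icc 1 r, η i ∈ Submonoid.powers ϑ2)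
    (hcosets : ∀ i ∈ Finset.Icc 1 r, ∀ j ∈ Finset.Icc 1 r, i ≠ j →
      ∀ t : ℕ, η i ≠ η j * ϑ1 ^ t) :
    let A : Finset (GaloisField p e) :=
      (Finset.Icc 1 r ×ˢ Finset.Icc 1 m).image fun st => η st.1 * ϑ1 ^ st.2
    A.card = r * m ∧
      ∀ s ∈ Finset.Icc 1 r, ∀ t ∈ Finset.Icc 1 m,
        (∏ b ∈ A.erase (η s * ϑ1 ^ t), (η s * ϑ1 ^ t - b)⁻¹) =
            η s * ϑ1 ^ t * (η s ^ m)⁻¹ * (m : GaloisField p e)⁻¹ *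
              ∏ s' ∈ (Finset.Icc 1 r).erase s, (η s ^ m - η s' ^ m)⁻¹ ∧
          (η s * ϑ1 ^ t)⁻¹ *
              (∏ b ∈ A.erase (η s * ϑ1 ^ t), (η s * ϑ1 ^ t - b)⁻¹) ≠ 0 ∧
          ((η s * ϑ1 ^ t)⁻¹ *
              (∏ b ∈ A.erase (η s * ϑ1 ^ t), (η s * ϑ1 ^ t - b)⁻¹)) ^ p ^ l =
            (η s * ϑ1 ^ t)⁻¹ *
              (∏ b ∈ A.erase (η s * ϑ1 ^ t), (η s * ϑ1 ^ t - b)⁻¹) := by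
  have hp : p.Prime := Fact.out
  have hq2 : 2 ≤ p ^ e := by
    calc 2 ≤ p := hp.two_le
      _ ≤ p ^ e := Nat.le_self_pow (by omega) p
  have hm0 : 0 < m := by
    rcases Nat.eq_zero_or_pos m with h | h
    · subst h; rw [Nat.zero_dvd] at hm; omega
    · exact h
  have hα0 : α ≠ 0 := by
    intro h
    have h1 := pow_orderOf_eq_one α
    rw [hα, h, zero_pow (by omega : p ^ e - 1 ≠ 0)] at h1
    exact one_ne_zero h1.symm
  have hl0 : 0 < l := by
    rcases Nat.eq_zero_or_pos l with h | h
    · subst h; rw [Nat.zero_dvd] at hle; omega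
    · exact h
  have hpl2 : 2 ≤ p ^ l := by
    calc 2 ≤ p := hp.two_le
      _ ≤ p ^ l := Nat.le_self_pow (by omega) p
  have hαprim : IsPrimitiveRoot α (p ^ e - 1) := hα ▸ IsPrimitiveRoot.orderOf α
  have hfac : p ^ e - 1 = (p ^ e - 1) / m * m := (Nat.div_mul_cancel hm).symm
  have hprim : IsPrimitiveRoot ϑ1 m := hϑ1 ▸ hαprim.pow (by omega) hfac
  have hord1 : orderOf ϑ1 = m := hprim.eq_orderOf.symm
  have hϑ1m : ϑ1 ^ m = 1 := hprim.pow_eq_one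
  have hϑ1ne : ϑ1 ≠ 0 := by rw [hϑ1]; exact pow_ne_zero _ hα0
  have hϑ2ne : ϑ2 ≠ 0 := by rw [hϑ2]; exact pow_ne_zero _ hα0
  have hη0 : ∀ i ∈ Finset.Icc 1 r, η i ≠ 0 := by
    intro i hi
    obtain ⟨k, hk⟩ := hη i hi
    rw [← hk]; exact pow_ne_zero _ hϑ2ne
  have hmF : (m : GaloisField p e) ≠ 0 := by
    rw [Ne, CharP.cast_eq_zero_iff (GaloisField p e) p]
    intro hdvd
    have h1 : p ∣ p ^ e - 1 := hdvd.trans hm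
    have h2 : p ∣ p ^ e := dvd_pow_self p (by omega)
    have h3 : p ∣ 1 := by
      have := Nat.dvd_sub h2 h1
      rwa [Nat.sub_sub_self (by omega)] at this
    have := Nat.dvd_one.mp h3
    have := hp.two_le
    omega
  have pm : ∀ n : ℕ, ϑ1 ^ (n % m) = ϑ1 ^ n := by
    intro n; rw [← hord1]; exact pow_mod_orderOf ϑ1 n
  have hpowinj : ∀ t ∈ Finset.Icc 1 m, ∀ t' ∈ Finset.Icc 1 m, ϑ1 ^ t = ϑ1 ^ t' → t = t' := by
    intro t ht t' ht' hEq
    have e1 : ϑ1 ^ (t % m) = ϑ1 ^ (t' % m) := by rw [pm, pm, hEq]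
    have e2 := hprim.pow_inj (Nat.mod_lt _ hm0) (Nat.mod_lt _ hm0) e1
    rw [Finset.mem_Icc] at ht ht'
    have d1 : t % m = t ∨ (t = m ∧ t % m = 0) := by
      rcases eq_or_lt_of_le ht.2 with rfl | hlt
      · exact Or.inr ⟨rfl, Nat.mod_self t⟩
      · exact Or.inl (Nat.mod_eq_of_lt hlt)
    have d2 : t' % m = t' ∨ (t' = m ∧ t' % m = 0) := by
      rcases eq_or_lt_of_le ht'.2 with rfl | hlt
      · exact Or.inr ⟨rfl, Nat.mod_self t'⟩
      · exact Or.inl (Nat.mod_eq_of_lt hlt)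
    omega
  have hinj : ∀ s ∈ Finset.Icc 1 r, ∀ t ∈ Finset.Icc 1 m, ∀ s' ∈ Finset.Icc 1 r,
      ∀ t' ∈ Finset.Icc 1 m, η s * ϑ1 ^ t = η s' * ϑ1 ^ t' → s = s' ∧ t = t' := by
    intro s hs t ht s' hs' t' ht' hEq
    by_cases hss : s = s'
    · subst hss
      have h1 : ϑ1 ^ t = ϑ1 ^ t' := mul_left_cancel₀ (hη0 s hs) hEq
      exact ⟨rfl, hpowinj t ht t' ht' h1⟩
    · exfalso
      have htm := Finset.mem_Icc.1 ht
      have key : η s = η s' * ϑ1 ^ (t' + (m - t)) := by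
        have h2 : η s * ϑ1 ^ t * ϑ1 ^ (m - t) = η s' * ϑ1 ^ t' * ϑ1 ^ (m - t) := by rw [hEq]
        rw [mul_assoc, ← pow_add, show t + (m - t) = m by omega, hϑ1m, mul_one] at h2
        rw [h2, mul_assoc, ← pow_add]
      exact hcosets s hs s' hs' hss _ key
  intro A
  have hA : A = (Finset.Icc 1 r ×ˢ Finset.Icc 1 m).image fun st => η st.1 * ϑ1 ^ st.2 := rfl
  rw [hA]
  constructor
  · rw [Finset.card_image_of_injOn, Finset.card_product, Nat.card_Icc, Nat.card_Icc]
    · simp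
    · intro x hx y hy hxy
      rw [Finset.mem_coe, Finset.mem_product] at hx hy
      have := hinj x.1 hx.1 x.2 hx.2 y.1 hy.1 y.2 hy.2 hxy
      exact Prod.ext_iff.mpr this
  · intro s hs t ht
    haveI : NeZero m := ⟨hm0.ne'⟩
    set a := η s * ϑ1 ^ t with ha
    have haz : a ≠ 0 := mul_ne_zero (hη0 s hs) (pow_ne_zero _ hϑ1ne)
    have ham : a ^ m = η s ^ m := by
      rw [ha, mul_pow, ← pow_mul, mul_comm t m, pow_mul, hϑ1m, one_pow, mul_one]
    -- erase of image
    have himg : ((Finset.Icc 1 r ×ˢ Finset.Icc 1 m).image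
          (fun st => η st.1 * ϑ1 ^ st.2)).erase a =
        ((Finset.Icc 1 r ×ˢ Finset.Icc 1 m).erase (s, t)).image
          (fun st => η st.1 * ϑ1 ^ st.2) := by
      ext x
      constructor
      · intro hx
        obtain ⟨hxa, hximg⟩ := Finset.mem_erase.1 hx
        obtain ⟨st', hst', hfx⟩ := Finset.mem_image.1 hximg
        refine Finset.mem_image.2 ⟨st', Finset.mem_erase.2 ⟨?_, hst'⟩, hfx⟩
        rintro rfl
        exact hxa hfx.symm
      · intro hx
        obtain ⟨st', hst'e, hfx⟩ := Finset.mem_image.1 hx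
        obtain ⟨hne, hst'⟩ := Finset.mem_erase.1 hst'e
        refine Finset.mem_erase.2 ⟨?_, Finset.mem_image.2 ⟨st', hst', hfx⟩⟩
        rw [← hfx]
        intro hEq
        obtain ⟨h1, h2⟩ := hinj st'.1 (Finset.mem_product.1 hst').1 st'.2
          (Finset.mem_product.1 hst').2 s hs t ht hEq
        exact hne (Prod.ext_iff.mpr ⟨h1, h2⟩)
    -- splitting of the index set
    have hs' := Finset.mem_Icc.1 hs
    have ht' := Finset.mem_Icc.1 ht
    have hsplit : (Finset.Icc 1 r ×ˢ Finset.Icc 1 m).erase (s, t) =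
        ({s} ×ˢ (Finset.Icc 1 m).erase t) ∪
          (((Finset.Icc 1 r).erase s) ×ˢ Finset.Icc 1 m) := by
      ext ⟨x, y⟩
      simp only [Finset.mem_erase, Finset.mem_product, Finset.mem_union, Finset.mem_singleton,
        Prod.mk.injEq, not_and, Finset.mem_Icc, ne_eq]
      constructor
      · rintro ⟨h1, ⟨hx1, hx2⟩, hy1, hy2⟩
        by_cases hxs : x = s
        · subst hxs
          exact Or.inl ⟨rfl, fun hyt => h1 rfl hyt, hy1, hy2⟩
        · exact Or.inr ⟨⟨hxs, hx1, hx2⟩, hy1, hy2⟩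
      · rintro (⟨rfl, hy1, hy2, hy3⟩ | ⟨⟨hx1, hx2, hx3⟩, hy1, hy2⟩)
        · exact ⟨fun _ hyt => hy1 hyt, ⟨hs'.1, hs'.2⟩, hy2, hy3⟩
        · exact ⟨fun hx _ => hx1 hx, ⟨hx2, hx3⟩, hy1, hy2⟩
    have hdisj : Disjoint ({s} ×ˢ (Finset.Icc 1 m).erase t)
        (((Finset.Icc 1 r).erase s) ×ˢ Finset.Icc 1 m) := by
      rw [Finset.disjoint_left]
      rintro ⟨x, y⟩ hx hy
      rw [Finset.mem_product] at hx hy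
      rw [Finset.mem_singleton] at hx
      exact (Finset.mem_erase.1 hy.1).1 hx.1
    -- inner products
    have hb1 : ∏ y ∈ (Finset.Icc 1 m).erase t, (a - η s * ϑ1 ^ y) =
        (m : GaloisField p e) * a ^ (m - 1) := by
      have hper : ∀ n : ℕ, a - η s * ϑ1 ^ n = a - η s * ϑ1 ^ (n % m) := by
        intro n; rw [pm n]
      rw [aux_reindex_erase hm0 (fun y => a - η s * ϑ1 ^ y) hper ht]
      have ha' : a = ϑ1 ^ (t % m) * η s := by rw [ha, pm t, mul_comm]
      calc ∏ i ∈ (Finset.range m).erase (t % m), (a - η s * ϑ1 ^ i)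
          = ∏ i ∈ (Finset.range m).erase (t % m), (ϑ1 ^ (t % m) * η s - ϑ1 ^ i * η s) := by
            refine Finset.prod_congr rfl fun i _ => ?_
            rw [← ha', mul_comm (η s)]
        _ = (m : GaloisField p e) * (ϑ1 ^ (t % m) * η s) ^ (m - 1) :=
            aux_deriv hprim hm0 (η s) (Nat.mod_lt _ hm0)
        _ = (m : GaloisField p e) * a ^ (m - 1) := by rw [← ha']
    have hb2 : ∀ s'' ∈ (Finset.Icc 1 r).erase s,
        ∏ y ∈ Finset.Icc 1 m, (a - η s'' * ϑ1 ^ y) = η s ^ m - η s'' ^ m := by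
      intro s'' _
      have hper : ∀ n : ℕ, a - η s'' * ϑ1 ^ n = a - η s'' * ϑ1 ^ (n % m) := by
        intro n; rw [pm n]
      rw [aux_reindex hm0 (fun y => a - η s'' * ϑ1 ^ y) hper]
      calc ∏ i ∈ Finset.range m, (a - η s'' * ϑ1 ^ i)
          = ∏ i ∈ Finset.range m, (a - ϑ1 ^ i * η s'') := by
            refine Finset.prod_congr rfl fun i _ => ?_
            rw [mul_comm (η s'')]
        _ = a ^ m - η s'' ^ m := aux_prod_eval hprim hm0 (η s'') a
        _ = η s ^ m - η s'' ^ m := by rw [ham]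
    -- the full product
    have hP : ∏ st ∈ (Finset.Icc 1 r ×ˢ Finset.Icc 1 m).erase (s, t),
        (a - η st.1 * ϑ1 ^ st.2) =
        ((m : GaloisField p e) * a ^ (m - 1)) *
          ∏ s' ∈ (Finset.Icc 1 r).erase s, (η s ^ m - η s' ^ m) := by
      rw [hsplit, Finset.prod_union hdisj, Finset.prod_product, Finset.prod_singleton,
        Finset.prod_product, hb1]
      congr 1
      exact Finset.prod_congr rfl hb2
    -- nonvanishing of the factors
    have hQne : ∀ s' ∈ (Finset.Icc 1 r).erase s, η s ^ m - η s' ^ m ≠ 0 := by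
      intro s' hs''
      obtain ⟨hne, hs'mem⟩ := Finset.mem_erase.1 hs''
      intro hEq
      have h1 : η s ^ m = η s' ^ m := sub_eq_zero.1 hEq
      have h2 : (η s / η s') ^ m = 1 := by
        rw [div_pow, h1, div_self (pow_ne_zero _ (hη0 s' hs'mem))]
      obtain ⟨i, _, hi⟩ := hprim.eq_pow_of_pow_eq_one h2
      have h3 : η s = η s' * ϑ1 ^ i := by
        rw [hi, mul_div_cancel₀ _ (hη0 s' hs'mem)]
      exact hcosets s hs s' hs'mem (fun h => hne h.symm) i h3
    have hQne' : (∏ s' ∈ (Finset.Icc 1 r).erase s, (η s ^ m - η s' ^ m)) ≠ 0 :=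
      Finset.prod_ne_zero_iff.2 hQne
    -- injectivity on the erased set for prod_image
    have hinj2 : ∀ x ∈ (Finset.Icc 1 r ×ˢ Finset.Icc 1 m).erase (s, t),
        ∀ y ∈ (Finset.Icc 1 r ×ˢ Finset.Icc 1 m).erase (s, t),
        (fun st => η st.1 * ϑ1 ^ st.2) x = (fun st => η st.1 * ϑ1 ^ st.2) y → x = y := by
      intro x hx y hy hxy
      have hx' := Finset.mem_product.1 (Finset.mem_of_mem_erase hx)
      have hy' := Finset.mem_product.1 (Finset.mem_of_mem_erase hy)
      exact Prod.ext_iff.mpr (hinj x.1 hx'.1 x.2 hx'.2 y.1 hy'.1 y.2 hy'.2 hxy)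
    -- the main formula
    have hu : (∏ b ∈ (((Finset.Icc 1 r ×ˢ Finset.Icc 1 m).image
          (fun st => η st.1 * ϑ1 ^ st.2)).erase a), (a - b)⁻¹) =
        a * (η s ^ m)⁻¹ * (m : GaloisField p e)⁻¹ *
          ∏ s' ∈ (Finset.Icc 1 r).erase s, (η s ^ m - η s' ^ m)⁻¹ := by
      rw [himg, Finset.prod_image hinj2]
      rw [Finset.prod_inv_distrib, Finset.prod_inv_distrib, hP]
      have h2 : a * (η s ^ m)⁻¹ = (a ^ (m - 1))⁻¹ := by
        rw [← ham, show a ^ m = a ^ (m - 1) * a by rw [← pow_succ, Nat.sub_add_cancel hm0],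
          mul_inv, mul_comm ((a ^ (m - 1))⁻¹) a⁻¹, ← mul_assoc, mul_inv_cancel₀ haz, one_mul]
      rw [mul_inv, mul_inv]
      rw [show a * (η s ^ m)⁻¹ * (m : GaloisField p e)⁻¹ *
            (∏ s' ∈ (Finset.Icc 1 r).erase s, (η s ^ m - η s' ^ m))⁻¹ =
          (a * (η s ^ m)⁻¹) * ((m : GaloisField p e)⁻¹ *
            (∏ s' ∈ (Finset.Icc 1 r).erase s, (η s ^ m - η s' ^ m))⁻¹) by ring, h2]
      ring
    refine ⟨hu, ?_, ?_⟩
    · rw [hu]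
      refine mul_ne_zero (inv_ne_zero haz) ?_
      refine mul_ne_zero (mul_ne_zero (mul_ne_zero haz ?_) ?_) ?_
      · exact inv_ne_zero (by rw [← ham]; exact pow_ne_zero _ haz)
      · exact inv_ne_zero hmF
      · rw [Finset.prod_inv_distrib]; exact inv_ne_zero hQne'
    · rw [hu]
      have hXa : a⁻¹ * (a * (η s ^ m)⁻¹ * (m : GaloisField p e)⁻¹ *
            ∏ s' ∈ (Finset.Icc 1 r).erase s, (η s ^ m - η s' ^ m)⁻¹) =
          (η s ^ m)⁻¹ * (m : GaloisField p e)⁻¹ *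
            ∏ s' ∈ (Finset.Icc 1 r).erase s, (η s ^ m - η s' ^ m)⁻¹ := by
        rw [show a * (η s ^ m)⁻¹ * (m : GaloisField p e)⁻¹ *
              (∏ s' ∈ (Finset.Icc 1 r).erase s, (η s ^ m - η s' ^ m)⁻¹) =
            a * ((η s ^ m)⁻¹ * ((m : GaloisField p e)⁻¹ *
              ∏ s' ∈ (Finset.Icc 1 r).erase s, (η s ^ m - η s' ^ m)⁻¹)) by ring,
          ← mul_assoc, inv_mul_cancel₀ haz, one_mul, ← mul_assoc]
      rw [hXa]
      -- Frobenius fixes everything in sight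
      have hfrobm : ∀ i ∈ Finset.Icc 1 r, (η i ^ m) ^ p ^ l = η i ^ m := by
        intro i hi
        obtain ⟨k, hk⟩ := hη i hi
        have hdl : p ^ l - 1 ∣ p ^ e - 1 := by
          have h := Nat.sub_dvd_pow_sub_pow (p ^ l) 1 (e / l)
          rwa [one_pow, ← pow_mul, Nat.mul_div_cancel' hle] at h
        have hϑ2key : ϑ2 ^ (m * (p ^ l - 1)) = 1 := by
          rw [hϑ2, ← pow_mul]
          apply orderOf_dvd_iff_pow_eq_one.mp
          rw [hα]
          set y := (p ^ e - 1) / (p ^ l - 1) with hy_def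
          set m₂ := Nat.gcd m y with hm₂_def
          have hy : y * (p ^ l - 1) = p ^ e - 1 := Nat.div_mul_cancel hdl
          have hm₂y : m₂ ∣ y := Nat.gcd_dvd_right m y
          have hm₂m : m₂ ∣ m := Nat.gcd_dvd_left m y
          have hm₂0 : 0 < m₂ := Nat.gcd_pos_of_pos_left y hm0
          obtain ⟨y', hy'⟩ := hm₂y
          obtain ⟨m', hm'⟩ := hm₂m
          have hkey : y / m₂ * (m * (p ^ l - 1)) = (p ^ e - 1) * m' := by
            rw [hy', Nat.mul_div_cancel_left y' hm₂0, ← hy, hy', hm']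
            ring
          rw [hkey]
          exact dvd_mul_right _ _
        have h1 : (η i ^ m) ^ (p ^ l - 1) = 1 := by
          rw [← hk, ← pow_mul, ← pow_mul,
            show k * (m * (p ^ l - 1)) = m * (p ^ l - 1) * k by ring, pow_mul, hϑ2key, one_pow]
        calc (η i ^ m) ^ p ^ l = (η i ^ m) ^ (p ^ l - 1) * (η i ^ m) := by
              rw [← pow_succ, Nat.sub_add_cancel (by omega : 1 ≤ p ^ l)]
          _ = η i ^ m := by rw [h1, one_mul]
      have hfrobdiff : ∀ s' ∈ (Finset.Icc 1 r).erase s,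
          (η s ^ m - η s' ^ m) ^ p ^ l = η s ^ m - η s' ^ m := by
        intro s' hs''
        rw [sub_pow_char_pow, hfrobm s hs, hfrobm s' (Finset.mem_of_mem_erase hs'')]
      have hfrobnat : ((m : GaloisField p e)) ^ p ^ l = (m : GaloisField p e) := by
        have key : ∀ j : ℕ, ((m : GaloisField p e)) ^ p ^ j = (m : GaloisField p e) := by
          intro j
          induction j with
          | zero => simp
          | succ n ih =>
            rw [pow_succ, pow_mul, ih, ← frobenius_def, map_natCast]
        exact key l
      have hR : (∏ s' ∈ (Finset.Icc 1 r).erase s, (η s ^ m - η s' ^ m)⁻¹) ^ p ^ l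
          = ∏ s' ∈ (Finset.Icc 1 r).erase s, (η s ^ m - η s' ^ m)⁻¹ := by
        rw [← Finset.prod_pow]
        refine Finset.prod_congr rfl fun s' hs'' => ?_
        rw [inv_pow, hfrobdiff s' hs'']
      rw [mul_pow, mul_pow, hR, inv_pow, inv_pow, hfrobnat, hfrobm s hs]
end
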